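/- arXiv:2202.04004 — 5 statements merged into one kernel-verified Lean document; each statement's English description precedes it below -/
import Mathlib

section
/- Let H and L be linear subspaces of R^n with H ∩ L^⊥ = {0}. Then L + R_H L = H + L, where R_H L denotes the image of L under the reflection R_H in H and + denotes the sum of subspaces. -/
open RealInnerProductSpace

/-- If `H ∩ L^⊥ = {0}`, then `L + R_H L = H + L`. -/
theorem sum_with_reflection_image (n : ℕ)
    (H L : Submodule ℝ (EuclideanSpace ℝ (Fin n))) (h : H ⊓ Lᗮ = ⊥) :
    L ⊔ Submodule.map
        ((Submodule.reflection H).toLinearEquiv :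
          EuclideanSpace ℝ (Fin n) →ₗ[ℝ] EuclideanSpace ℝ (Fin n)) L = H ⊔ L := by
  set E := EuclideanSpace ℝ (Fin n)
  set P : E →ₗ[ℝ] E := H.subtype ∘ₗ (Submodule.orthogonalProjectionOnto H).toLinearMap with hP
  have hPmem : ∀ x : E, P x ∈ H := fun x => (Submodule.orthogonalProjectionOnto H x).2
  have hrefl : ∀ x : E, Submodule.reflection H x = 2 • P x - x := fun x => Submodule.reflection_apply x
  set M : Submodule ℝ E := Submodule.map P L with hMdef
  have hMH : M ≤ H := by
    rintro _ ⟨x, _, rfl⟩; exact hPmem x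
  have hMo : Mᗮ ⊓ H = ⊥ := by
    rw [eq_bot_iff]
    rintro y ⟨hy1, hy2⟩
    have hyL : y ∈ Lᗮ := by
      rw [Submodule.mem_orthogonal]
      intro x hx
      have h1 : ⟪P x, y⟫ = 0 :=
        (Submodule.mem_orthogonal M y).mp hy1 (P x) ⟨x, hx, rfl⟩
      have h2 : ⟪x - P x, y⟫ = 0 := Submodule.starProjection_inner_eq_zero (K := H) x y hy2
      have h3 : ⟪x - P x, y⟫ = ⟪x, y⟫ - ⟪P x, y⟫ := inner_sub_left x (P x) y
      linarith
    have hy : y ∈ H ⊓ Lᗮ := ⟨hy2, hyL⟩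
    rw [h] at hy
    exact hy
  have hHM : H = M := by
    have h4 := Submodule.sup_orthogonal_inf_of_hasOrthogonalProjection hMH
    rw [hMo, sup_bot_eq] at h4
    exact h4.symm
  apply le_antisymm
  · apply sup_le le_sup_right
    rintro _ ⟨x, hx, rfl⟩
    have hx2 : ((Submodule.reflection H).toLinearEquiv : E →ₗ[ℝ] E) x = 2 • P x - x := hrefl x
    rw [hx2]
    exact Submodule.sub_mem _ (nsmul_mem (Submodule.mem_sup_left (hPmem x)) 2)
      (Submodule.mem_sup_right hx)
  · apply sup_le _ le_sup_left
    intro y hy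
    rw [hHM] at hy
    obtain ⟨x, hx, rfl⟩ := hy
    have hrx : Submodule.reflection H x ∈
        Submodule.map ((Submodule.reflection H).toLinearEquiv : E →ₗ[ℝ] E) L := ⟨x, hx, rfl⟩
    have key : P x = (2⁻¹ : ℝ) • (x + Submodule.reflection H x) := by
      rw [hrefl x]
      module
    rw [key]
    exact Submodule.smul_mem _ _ (Submodule.add_mem _ (Submodule.mem_sup_left hx) (Submodule.mem_sup_right hrx))
end

section
/- Let n ≥ 3, let H be a 1-dimensional linear subspace of R^n, and let O(n)_H denote the subgroup of orthogonal transformations of R^n fixing H pointwise. Let φ be an orthogonal transformation of R^n with φH ≠ H. If E ⊆ S^{n−1} is nonempty, closed, invariant under φ (i.e., φE = E), and invariant under every element of O(n)_H, then E = S^{n−1}. -/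
open Real Module Submodule

local notation "⟪" x ", " y "⟫" => @inner ℝ _ _ x y

section Aux

variable {V : Type*} [NormedAddCommGroup V] [InnerProductSpace ℝ V] [FiniteDimensional ℝ V]

set_option maxHeartbeats 1000000 in
/-- In a real inner product space of dimension at least 3, given two unit vectors `u, v`
which are not parallel, one can find a unit vector with prescribed (feasible) inner products
with `u` and `v`. -/
lemma aux_exists_unit (hdim : 3 ≤ finrank ℝ V) {u v : V} (hu : ‖u‖ = 1) (hv : ‖v‖ = 1)
    (hk : ⟪u, v⟫ ^ 2 < 1) {s t : ℝ} (hs : s ^ 2 ≤ 1)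
    (h : (t - s * ⟪u, v⟫) ^ 2 ≤ (1 - s ^ 2) * (1 - ⟪u, v⟫ ^ 2)) :
    ∃ x : V, ‖x‖ = 1 ∧ ⟪u, x⟫ = s ∧ ⟪v, x⟫ = t := by
  classical
  set k : ℝ := ⟪u, v⟫ with hkdef
  have hk1 : (0:ℝ) < 1 - k ^ 2 := by linarith
  -- an auxiliary vector orthogonal to both u and v
  set K : Submodule ℝ V := Submodule.span ℝ ({u, v} : Set V) with hKdef
  have hKfr : finrank ℝ K ≤ 2 := by
    have h1 : K = Submodule.span ℝ (↑({u, v} : Finset V) : Set V) := by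
      rw [hKdef]; simp
    rw [h1]
    exact (finrank_span_finset_le_card ({u, v} : Finset V)).trans
      ((Finset.card_insert_le _ _).trans (by simp))
  have hKo : Kᗮ ≠ ⊥ := by
    intro hbot
    have := K.finrank_add_finrank_orthogonal
    rw [hbot, finrank_bot] at this
    omega
  obtain ⟨w₀, hw₀K, hw₀⟩ := Submodule.ne_bot_iff _ |>.mp hKo
  have hw₀n : ‖w₀‖ ≠ 0 := norm_ne_zero_iff.mpr hw₀
  have huw₀ : ⟪u, w₀⟫ = 0 :=
    Submodule.inner_right_of_mem_orthogonal (Submodule.subset_span (by simp)) hw₀K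
  have hvw₀ : ⟪v, w₀⟫ = 0 :=
    Submodule.inner_right_of_mem_orthogonal (Submodule.subset_span (by simp)) hw₀K
  set w : V := ‖w₀‖⁻¹ • w₀ with hwdef
  set r : ℝ := Real.sqrt (1 - k ^ 2) with hrdef
  have hr2 : r ^ 2 = 1 - k ^ 2 := Real.sq_sqrt hk1.le
  have hrpos : 0 < r := Real.sqrt_pos.mpr hk1
  set e : V := r⁻¹ • (v - k • u) with hedef
  set b : ℝ := (t - s * k) / r with hbdef
  have hb2 : b ^ 2 ≤ 1 - s ^ 2 := by
    have : b ^ 2 = (t - s * k) ^ 2 / (1 - k ^ 2) := by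
      rw [hbdef, div_pow, hr2]
    rw [this]
    rw [div_le_iff₀ hk1]
    linarith
  have hc0 : 0 ≤ 1 - s ^ 2 - b ^ 2 := by linarith
  set c : ℝ := Real.sqrt (1 - s ^ 2 - b ^ 2) with hcdef
  have hc2 : c ^ 2 = 1 - s ^ 2 - b ^ 2 := Real.sq_sqrt hc0
  set x : V := s • u + b • e + c • w with hxdef
  -- basic inner products
  have huu : ⟪u, u⟫ = 1 := by
    rw [real_inner_self_eq_norm_sq, hu]; norm_num
  have hvv : ⟪v, v⟫ = 1 := by
    rw [real_inner_self_eq_norm_sq, hv]; norm_num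
  have hvu : ⟪v, u⟫ = k := by rw [real_inner_comm]
  have hww₀ : ⟪w₀, w₀⟫ = ‖w₀‖ ^ 2 := real_inner_self_eq_norm_sq w₀
  have hw₀u : ⟪w₀, u⟫ = 0 := by rw [real_inner_comm]; exact huw₀
  have hw₀v : ⟪w₀, v⟫ = 0 := by rw [real_inner_comm]; exact hvw₀
  have hue : ⟪u, e⟫ = 0 := by
    simp only [hedef, inner_smul_right, inner_sub_right, huu, hkdef]
    ring
  have hve : ⟪v, e⟫ = r := by
    have : ⟪v, e⟫ = r⁻¹ * (1 - k ^ 2) := by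
      simp only [hedef, inner_smul_right, inner_sub_right, hvv, hvu]
      ring
    rw [this, ← hr2]
    field_simp
  have hee : ⟪e, e⟫ = 1 := by
    have hsub : ⟪v - k • u, v - k • u⟫ = 1 - k ^ 2 := by
      simp only [inner_sub_left, inner_sub_right, inner_smul_left, inner_smul_right,
        hvv, hvu, huu, hkdef, RCLike.conj_to_real]
      ring
    have : ⟪e, e⟫ = r⁻¹ * (r⁻¹ * ⟪v - k • u, v - k • u⟫) := by
      simp only [hedef, real_inner_smul_left, real_inner_smul_right]
    rw [this, hsub, ← hr2]
    field_simp
  have huw : ⟪u, w⟫ = 0 := by simp [hwdef, inner_smul_right, huw₀]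
  have hvw : ⟪v, w⟫ = 0 := by simp [hwdef, inner_smul_right, hvw₀]
  have hew : ⟪e, w⟫ = 0 := by
    simp only [hedef, hwdef, real_inner_smul_left, real_inner_smul_right,
      inner_sub_left, huw₀, hvw₀, inner_smul_left, RCLike.conj_to_real]
    ring
  have hww : ⟪w, w⟫ = 1 := by
    have : ⟪w, w⟫ = ‖w₀‖⁻¹ * (‖w₀‖⁻¹ * ⟪w₀, w₀⟫) := by
      simp only [hwdef, real_inner_smul_left, real_inner_smul_right]
    rw [this, hww₀]
    field_simp
  have hwe : ⟪w, e⟫ = 0 := by rw [real_inner_comm]; exact hew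
  have heu : ⟪e, u⟫ = 0 := by rw [real_inner_comm]; exact hue
  have hwu : ⟪w, u⟫ = 0 := by rw [real_inner_comm]; exact huw
  have hux : ⟪u, x⟫ = s := by
    simp only [hxdef, inner_add_right, real_inner_smul_right, huu, hue, huw]
    ring
  have hvx : ⟪v, x⟫ = t := by
    have : ⟪v, x⟫ = s * k + b * r := by
      simp only [hxdef, inner_add_right, real_inner_smul_right, hvu, hve, hvw]
      ring
    rw [this, hbdef]
    field_simp
    ring
  refine ⟨x, ?_, hux, hvx⟩
  have hxx : ⟪x, x⟫ = s ^ 2 + b ^ 2 + c ^ 2 := by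
    simp only [hxdef, inner_add_left, inner_add_right, real_inner_smul_left,
      real_inner_smul_right, huu, hue, huw, heu, hee, hew, hwu, hwe, hww]
    ring
  have hx1 : ⟪x, x⟫ = 1 := by rw [hxx, hc2]; ring
  have hn2 : ‖x‖ ^ 2 = 1 := by rw [← real_inner_self_eq_norm_sq, hx1]
  rw [← Real.sqrt_sq (norm_nonneg x), hn2, Real.sqrt_one]

/-- The key trigonometric feasibility inequality. -/
lemma aux_trig {θ α γ : ℝ} (hθ0 : 0 ≤ θ) (hθπ : θ ≤ π) (hα0 : 0 ≤ α) (hαπ : α ≤ π)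
    (hγ0 : 0 ≤ γ) (hγπ : γ ≤ π) (h1 : θ - γ ≤ α) (h2 : γ - θ ≤ α) (h3 : α ≤ θ + γ)
    (h4 : θ + α + γ ≤ 2 * π) :
    (Real.cos α - Real.cos θ * Real.cos γ) ^ 2 ≤
      (1 - Real.cos θ ^ 2) * (1 - Real.cos γ ^ 2) := by
  have hsθ : 0 ≤ Real.sin θ := Real.sin_nonneg_of_nonneg_of_le_pi hθ0 hθπ
  have hsγ : 0 ≤ Real.sin γ := Real.sin_nonneg_of_nonneg_of_le_pi hγ0 hγπ
  have hup : Real.cos α ≤ Real.cos θ * Real.cos γ + Real.sin θ * Real.sin γ := by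
    rcases le_total γ θ with hc | hc
    · have := Real.cos_le_cos_of_nonneg_of_le_pi (by linarith : (0:ℝ) ≤ θ - γ) hαπ h1
      rw [Real.cos_sub] at this
      linarith
    · have := Real.cos_le_cos_of_nonneg_of_le_pi (by linarith : (0:ℝ) ≤ γ - θ) hαπ h2
      rw [Real.cos_sub] at this
      linarith
  have hlo : Real.cos θ * Real.cos γ - Real.sin θ * Real.sin γ ≤ Real.cos α := by
    rcases le_total (θ + γ) π with hc | hc
    · have := Real.cos_le_cos_of_nonneg_of_le_pi hα0 hc h3
      rw [Real.cos_add] at this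
      linarith
    · have h5 : α ≤ 2 * π - (θ + γ) := by linarith
      have := Real.cos_le_cos_of_nonneg_of_le_pi hα0 (by linarith) h5
      rw [Real.cos_two_pi_sub, Real.cos_add] at this
      linarith
  nlinarith [Real.sin_sq_add_cos_sq θ, Real.sin_sq_add_cos_sq γ,
    mul_nonneg (sub_nonneg.mpr hup) (sub_nonneg.mpr hlo)]

end Aux

set_option maxHeartbeats 1000000 in
/-- If `n ≥ 3`, `H` is a line through the origin, `φ` is an orthogonal transformation with
`φH ≠ H`, and `E ⊆ Sⁿ⁻¹` is nonempty, closed, invariant under `φ` and under every orthogonal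
transformation fixing `H` pointwise, then `E = Sⁿ⁻¹`. -/
theorem full_sphere_of_line_stabilizer_invariance (n : ℕ) (hn : 3 ≤ n)
    (H : Submodule ℝ (EuclideanSpace ℝ (Fin n))) (hH : Module.finrank ℝ H = 1)
    (φ : EuclideanSpace ℝ (Fin n) ≃ₗᵢ[ℝ] EuclideanSpace ℝ (Fin n))
    (hφ : Submodule.map
      (φ.toLinearEquiv : EuclideanSpace ℝ (Fin n) →ₗ[ℝ] EuclideanSpace ℝ (Fin n)) H ≠ H)
    (E : Set (EuclideanSpace ℝ (Fin n))) (hne : E.Nonempty) (hcl : IsClosed E)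
    (hsub : E ⊆ Metric.sphere 0 1)
    (hinvφ : φ '' E = E)
    (hstab : ∀ ψ : EuclideanSpace ℝ (Fin n) ≃ₗᵢ[ℝ] EuclideanSpace ℝ (Fin n),
      (∀ x ∈ H, ψ x = x) → ψ '' E = E) :
    E = Metric.sphere 0 1 := by
  classical
  have hdim : 3 ≤ finrank ℝ (EuclideanSpace ℝ (Fin n)) := by
    rw [finrank_euclideanSpace_fin]; exact hn
  have hnorm : ∀ z ∈ E, ‖z‖ = 1 := fun z hz => mem_sphere_zero_iff_norm.mp (hsub hz)
  -- a unit vector spanning H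
  have hHne : H ≠ ⊥ := by
    intro hbot; rw [hbot, finrank_bot] at hH; omega
  obtain ⟨u₀, hu₀H, hu₀⟩ := Submodule.ne_bot_iff _ |>.mp hHne
  have hHspan : H = (ℝ ∙ u₀) := by
    refine (Submodule.eq_of_le_of_finrank_le ((Submodule.span_singleton_le_iff_mem _ _).mpr
      hu₀H) ?_).symm
    rw [hH, finrank_span_singleton hu₀]
  set u : (EuclideanSpace ℝ (Fin n)) := ‖u₀‖⁻¹ • u₀ with hudef
  have hu₀n : ‖u₀‖ ≠ 0 := norm_ne_zero_iff.mpr hu₀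
  have hu : ‖u‖ = 1 := by
    rw [hudef, norm_smul, norm_inv, norm_norm, inv_mul_cancel₀ hu₀n]
  have hune : u ≠ 0 := by
    intro h0; rw [h0, norm_zero] at hu; norm_num at hu
  have hHu : H = (ℝ ∙ u) := by
    rw [hHspan, hudef]
    exact (Submodule.span_singleton_smul_eq (isUnit_iff_ne_zero.mpr (inv_ne_zero hu₀n)) u₀).symm
  set v : (EuclideanSpace ℝ (Fin n)) := φ u with hvdef
  have hv : ‖v‖ = 1 := by rw [hvdef, φ.norm_map]; exact hu
  have hvne : v ≠ 0 := by
    intro h0; rw [h0, norm_zero] at hv; norm_num at hv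
  -- the image of H under φ is spanned by v
  have hmap : Submodule.map
      (φ.toLinearEquiv : (EuclideanSpace ℝ (Fin n)) →ₗ[ℝ] (EuclideanSpace ℝ (Fin n))) H = (ℝ ∙ v) := by
    rw [hHu, Submodule.map_span, Set.image_singleton]
    rfl
  set k : ℝ := ⟪u, v⟫ with hkdef
  have hkabs : |k| < 1 := by
    rcases lt_or_ge (|k|) 1 with h | h
    · exact h
    · exfalso
      have hle : |k| ≤ 1 := by
        have := abs_real_inner_le_norm u v
        rwa [hu, hv, one_mul] at this
      have heq : ‖⟪u, v⟫‖ = ‖u‖ * ‖v‖ := by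
        rw [hu, hv, one_mul, Real.norm_eq_abs, ← hkdef]
        linarith
      obtain ⟨r, hr0, hr⟩ := (norm_inner_eq_norm_iff hune hvne).mp heq
      apply hφ
      rw [hmap, hHu, hr]
      exact Submodule.span_singleton_smul_eq (isUnit_iff_ne_zero.mpr hr0) u
  have hk2 : k ^ 2 < 1 := by
    have := abs_nonneg k
    nlinarith [sq_abs k]
  have hkl : -1 < k := by cases' abs_lt.mp hkabs with h1 h2; exact h1
  have hkr : k < 1 := by cases' abs_lt.mp hkabs with h1 h2; exact h2
  -- invariance under latitudes of u
  have hPu : ∀ x y : (EuclideanSpace ℝ (Fin n)), x ∈ E → ‖y‖ = 1 → ⟪u, x⟫ = ⟪u, y⟫ → y ∈ E := by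
    intro x y hx hy h
    by_cases hxy : x = y
    · exact hxy ▸ hx
    · have hfix : ∀ h' ∈ H, (reflection ((ℝ ∙ (x - y))ᗮ)) h' = h' := by
        intro h' hh'
        apply reflection_mem_subspace_eq_self
        rw [Submodule.mem_orthogonal]
        intro z hz
        obtain ⟨c, rfl⟩ := Submodule.mem_span_singleton.mp hz
        rw [hHu] at hh'
        obtain ⟨c', rfl⟩ := Submodule.mem_span_singleton.mp hh'
        have h2 : ⟪x, u⟫ = ⟪y, u⟫ := by
          rw [real_inner_comm u x, h]; exact real_inner_comm y u
        simp only [inner_smul_left, inner_smul_right, inner_sub_left,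
          RCLike.conj_to_real, h2]
        ring
      rw [← hstab _ hfix]
      exact ⟨x, hx, reflection_sub (by rw [hnorm x hx, hy])⟩
  -- invariance under latitudes of v
  have hPv : ∀ x y : (EuclideanSpace ℝ (Fin n)), x ∈ E → ‖y‖ = 1 → ⟪v, x⟫ = ⟪v, y⟫ → y ∈ E := by
    intro x y hx hy h
    by_cases hxy : x = y
    · exact hxy ▸ hx
    · set ρ := reflection ((ℝ ∙ (x - y))ᗮ) with hρdef
      have hρx : ρ x = y := reflection_sub (by rw [hnorm x hx, hy])
      set ψ := (φ.trans ρ).trans φ.symm with hψdef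
      have hfix : ∀ h' ∈ H, ψ h' = h' := by
        intro h' hh'
        rw [hHu] at hh'
        obtain ⟨c', rfl⟩ := Submodule.mem_span_singleton.mp hh'
        have hstep : φ (c' • u) = c' • v := by rw [map_smul, hvdef]
        have hρv : ρ (c' • v) = c' • v := by
          apply reflection_mem_subspace_eq_self
          rw [Submodule.mem_orthogonal]
          intro z hz
          obtain ⟨c, rfl⟩ := Submodule.mem_span_singleton.mp hz
          have h2 : ⟪x, v⟫ = ⟪y, v⟫ := by
            rw [real_inner_comm v x, h]; exact real_inner_comm y v
          simp only [inner_smul_left, inner_smul_right, inner_sub_left,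
            RCLike.conj_to_real, h2]
          ring
        show φ.symm (ρ (φ (c' • u))) = c' • u
        rw [hstep, hρv, map_smul, hvdef, φ.symm_apply_apply]
      have hψE := hstab ψ hfix
      have h1 : φ.symm x ∈ E := by
        rw [← hinvφ] at hx
        obtain ⟨z, hz, rfl⟩ := hx
        simpa using hz
      have h2 : ψ (φ.symm x) ∈ E := by
        rw [← hψE]; exact ⟨_, h1, rfl⟩
      have h3 : ψ (φ.symm x) = φ.symm y := by
        show φ.symm (ρ (φ (φ.symm x))) = _
        rw [φ.apply_symm_apply, hρx]
      rw [h3] at h2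
      have h4 : φ (φ.symm y) ∈ E := by
        rw [← hinvφ]; exact ⟨_, h2, rfl⟩
      simpa using h4
  -- angle setup
  set γ : ℝ := Real.arccos k with hγdef
  have hγ0 : 0 < γ := Real.arccos_pos.mpr hkr
  have hγπ' : γ ≤ π := Real.arccos_le_pi k
  have hγπ : γ < π := by
    rcases lt_or_eq_of_le hγπ' with h | h
    · exact h
    · exfalso
      have := Real.arccos_eq_pi.mp h
      linarith
  have hcosγ : Real.cos γ = k := Real.cos_arccos (by linarith) (by linarith)
  set δ : ℝ := min γ (π - γ) with hδdef
  have hδ0 : 0 < δ := lt_min hγ0 (by linarith)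
  have hδγ : δ ≤ γ := min_le_left _ _
  have hδπγ : δ ≤ π - γ := min_le_right _ _
  have hπ := Real.pi_pos
  -- one-step reachability
  have hreach : ∀ θ θ' : ℝ, 0 ≤ θ → θ ≤ π → 0 ≤ θ' → θ' ≤ π → |θ - θ'| ≤ δ →
      (∃ x ∈ E, ⟪u, x⟫ = Real.cos θ) → ∃ x ∈ E, ⟪u, x⟫ = Real.cos θ' := by
    intro θ θ' hθ0 hθπ hθ'0 hθ'π hd ⟨x, hxE, hxθ⟩
    set m : ℝ := min θ θ' with hmdef
    set M : ℝ := max θ θ' with hMdef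
    have hm0 : 0 ≤ m := le_min hθ0 hθ'0
    have hmθ : m ≤ θ := min_le_left _ _
    have hmθ' : m ≤ θ' := min_le_right _ _
    have hMθ : θ ≤ M := le_max_left _ _
    have hMθ' : θ' ≤ M := le_max_right _ _
    have hMπ : M ≤ π := max_le hθπ hθ'π
    have hMm : M - m ≤ δ := by
      rcases le_total θ θ' with hc | hc
      · rw [hmdef, hMdef, min_eq_left hc, max_eq_right hc]
        rw [abs_sub_comm, abs_of_nonneg (by linarith)] at hd
        linarith
      · rw [hmdef, hMdef, min_eq_right hc, max_eq_left hc]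
        rw [abs_of_nonneg (by linarith)] at hd
        linarith
    set α : ℝ := max 0 (max (γ - m) (M - γ)) with hαdef
    have hα0 : 0 ≤ α := le_max_left _ _
    have hαa : γ - m ≤ α := le_trans (le_max_left _ _) (le_max_right _ _)
    have hαb : M - γ ≤ α := le_trans (le_max_right _ _) (le_max_right _ _)
    have hub1 : α ≤ m + γ := by
      apply max_le (by linarith)
      apply max_le <;> linarith
    have hub2 : α ≤ 2 * π - γ - M := by
      apply max_le (by linarith)
      apply max_le <;> linarith
    have hαπ : α ≤ π := by
      apply max_le (by linarith)
      apply max_le <;> linarith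
    have hcs : ∀ β : ℝ, Real.cos β ^ 2 ≤ 1 := by
      intro β
      nlinarith [Real.sin_sq_add_cos_sq β, sq_nonneg (Real.sin β)]
    -- first move: within the u-latitude of x, find x₁ with prescribed v-inner
    obtain ⟨x₁, hx₁n, hx₁u, hx₁v⟩ := aux_exists_unit hdim hu hv hk2 (hcs θ)
      (by rw [← hkdef, ← hcosγ]
          exact aux_trig hθ0 hθπ hα0 hαπ hγ0.le hγπ'
            (by linarith) (by linarith) (by linarith) (by linarith)
            : (Real.cos α - Real.cos θ * ⟪u, v⟫) ^ 2 ≤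
              (1 - Real.cos θ ^ 2) * (1 - ⟪u, v⟫ ^ 2))
    have hx₁E : x₁ ∈ E := hPu x x₁ hxE hx₁n (by rw [hxθ, hx₁u])
    -- second move: within the v-latitude of x₁, find x₂ with prescribed u-inner
    obtain ⟨x₂, hx₂n, hx₂u, hx₂v⟩ := aux_exists_unit hdim hu hv hk2 (hcs θ')
      (by rw [← hkdef, ← hcosγ]
          exact aux_trig hθ'0 hθ'π hα0 hαπ hγ0.le hγπ'
            (by linarith) (by linarith) (by linarith) (by linarith)
            : (Real.cos α - Real.cos θ' * ⟪u, v⟫) ^ 2 ≤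
              (1 - Real.cos θ' ^ 2) * (1 - ⟪u, v⟫ ^ 2))
    have hx₂E : x₂ ∈ E := hPv x₁ x₂ hx₁E hx₂n (by rw [hx₁v, hx₂v])
    exact ⟨x₂, hx₂E, hx₂u⟩
  -- base point
  obtain ⟨x₀, hx₀⟩ := hne
  set s₀ : ℝ := ⟪u, x₀⟫ with hs₀def
  have hs₀ : |s₀| ≤ 1 := by
    have := abs_real_inner_le_norm u x₀
    rwa [hu, hnorm x₀ hx₀, one_mul] at this
  set θ₀ : ℝ := Real.arccos s₀ with hθ₀def
  have hθ₀0 : 0 ≤ θ₀ := Real.arccos_nonneg _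
  have hθ₀π : θ₀ ≤ π := Real.arccos_le_pi _
  have hcosθ₀ : Real.cos θ₀ = s₀ :=
    Real.cos_arccos (by cases' abs_le.mp hs₀ with h1 h2; linarith)
      (by cases' abs_le.mp hs₀ with h1 h2; linarith)
  -- multi-step reachability
  have key : ∀ N : ℕ, ∀ θ' : ℝ, 0 ≤ θ' → θ' ≤ π → |θ' - θ₀| ≤ (N : ℝ) * δ →
      ∃ x ∈ E, ⟪u, x⟫ = Real.cos θ' := by
    intro N
    induction N with
    | zero =>
      intro θ' hθ'0 hθ'π hd
      simp only [Nat.cast_zero, zero_mul] at hd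
      have : θ' = θ₀ := by
        have := abs_nonneg (θ' - θ₀)
        have h0 : |θ' - θ₀| = 0 := le_antisymm hd this
        have := abs_eq_zero.mp h0
        linarith
      rw [this, hcosθ₀]
      exact ⟨x₀, hx₀, rfl⟩
    | succ N ih =>
      intro θ' hθ'0 hθ'π hd
      have hNδ : 0 ≤ (N : ℝ) * δ := by positivity
      set d : ℝ := θ' - θ₀ with hddef
      have hdabs : |d| ≤ ((N : ℝ) + 1) * δ := by
        rw [hddef]
        convert hd using 2
        push_cast
        ring
      have hd1 : -(((N : ℝ) + 1) * δ) ≤ d := (abs_le.mp hdabs).1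
      have hd2 : d ≤ ((N : ℝ) + 1) * δ := (abs_le.mp hdabs).2
      rcases le_total d (-((N : ℝ) * δ)) with hc1 | hc1
      · -- θ'' = θ₀ - N δ
        have h1 : ∃ x ∈ E, ⟪u, x⟫ = Real.cos (θ₀ - (N : ℝ) * δ) := by
          apply ih _ (by linarith) (by linarith)
          rw [abs_of_nonpos (by linarith)]
          linarith
        apply hreach (θ₀ - (N : ℝ) * δ) θ' (by linarith) (by linarith) hθ'0 hθ'π _ h1
        rw [abs_of_nonneg (by linarith)]
        linarith
      · rcases le_total ((N : ℝ) * δ) d with hc2 | hc2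
        · -- θ'' = θ₀ + N δ
          have h1 : ∃ x ∈ E, ⟪u, x⟫ = Real.cos (θ₀ + (N : ℝ) * δ) := by
            apply ih _ (by linarith) (by linarith)
            rw [abs_of_nonneg (by linarith)]
            linarith
          apply hreach (θ₀ + (N : ℝ) * δ) θ' (by linarith) (by linarith) hθ'0 hθ'π _ h1
          rw [abs_of_nonpos (by linarith)]
          linarith
        · -- θ'' = θ'
          have h1 : ∃ x ∈ E, ⟪u, x⟫ = Real.cos θ' := by
            apply ih _ hθ'0 hθ'π
            rw [abs_le]
            constructor <;> linarith
          exact h1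
  -- conclude
  apply Set.Subset.antisymm hsub
  intro y hy
  have hy1 : ‖y‖ = 1 := mem_sphere_zero_iff_norm.mp hy
  set sy : ℝ := ⟪u, y⟫ with hsydef
  have hsy : |sy| ≤ 1 := by
    have := abs_real_inner_le_norm u y
    rwa [hu, hy1, one_mul] at this
  set θ' : ℝ := Real.arccos sy with hθ'def
  have hcosθ' : Real.cos θ' = sy :=
    Real.cos_arccos (by cases' abs_le.mp hsy with h1 h2; linarith)
      (by cases' abs_le.mp hsy with h1 h2; linarith)
  set N : ℕ := ⌈π / δ⌉₊ with hNdef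
  have hNδ : π ≤ (N : ℝ) * δ := by
    have := Nat.le_ceil (π / δ)
    rw [div_le_iff₀ hδ0] at this
    exact this.trans (by rw [hNdef])
  obtain ⟨x, hxE, hxu⟩ := key N θ' (Real.arccos_nonneg _) (Real.arccos_le_pi _) (by
    rw [abs_le]
    constructor
    · have := Real.arccos_le_pi sy
      linarith [Real.arccos_nonneg sy]
    · have := Real.arccos_le_pi sy
      linarith [Real.arccos_nonneg sy])
  exact hPu x y hxE hy1 (by rw [hxu, hcosθ'])
end

section
/- Let H_1 and H_2 be subspaces of R^n of dimensions k and i with i ≤ k, given in an orthonormal basis e_1, …, e_n by H_1 = span{e_1, …, e_k} and H_2 = span{cos α_j e_j + sin α_j e_{i+k+1−j} : j = 1, …, i} for angles α_1, …, α_i. If x = Σ_{j=1}^i ρ_j (cos θ_j · e_j + sin θ_j · e_{i+k+1−j}) + y_1 + y_2, with ρ_j ∈ R, θ_j ∈ [0, 2π), y_1 ∈ span{e_{i+1}, …, e_k}, and y_2 ∈ (H_1 + H_2)^⊥, then R_{H_2} x = Σ_{j=1}^i ρ_j (cos(2α_j − θ_j) e_j + sin(2α_j − θ_j) e_{i+k+1−j})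 − y_1 − y_2. -/
open Real

/-- Lemma 3.3, formula (3.5): the action of the reflection `R_{H₂}` on a point written in the
adapted coordinates. Indices are zero-based: `e_j` for `j = 1,…,i` becomes `e ⟨j⟩` for
`j : Fin i`, and `e_{i+k+1−j}` becomes `e ⟨i+k−1−j⟩`. -/
theorem reflection_formula_adapted_coordinates (n i k : ℕ) (hik : i ≤ k) (hkn : i + k ≤ n)
    (e : OrthonormalBasis (Fin n) ℝ (EuclideanSpace ℝ (Fin n)))
    (α ρ θ : Fin i → ℝ) (hθ : ∀ j, θ j ∈ Set.Ico 0 (2 * π))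
    (H₁ H₂ : Submodule ℝ (EuclideanSpace ℝ (Fin n)))
    (hH₁ : H₁ = Submodule.span ℝ (Set.range fun j : Fin k => e ⟨j, by omega⟩))
    (hH₂ : H₂ = Submodule.span ℝ (Set.range fun j : Fin i =>
      cos (α j) • e ⟨j, by omega⟩ + sin (α j) • e ⟨i + k - 1 - j, by omega⟩))
    (y₁ y₂ x : EuclideanSpace ℝ (Fin n))
    (hy₁ : y₁ ∈ Submodule.span ℝ (Set.range fun j : Fin (k - i) => e ⟨i + j, by omega⟩))
    (hy₂ : y₂ ∈ (H₁ ⊔ H₂)ᗮ)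
    (hx : x = (∑ j : Fin i, ρ j •
        (cos (θ j) • e ⟨j, by omega⟩ + sin (θ j) • e ⟨i + k - 1 - j, by omega⟩)) + y₁ + y₂) :
    Submodule.reflection H₂ x = (∑ j : Fin i, ρ j •
        (cos (2 * α j - θ j) • e ⟨j, by omega⟩ +
          sin (2 * α j - θ j) • e ⟨i + k - 1 - j, by omega⟩)) - y₁ - y₂ := by
  have horth := orthonormal_iff_ite.mp e.orthonormal
  have hy₂' : y₂ ∈ H₂ᗮ := Submodule.orthogonal_le le_sup_right hy₂
  have hy₁' : y₁ ∈ H₂ᗮ := by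
    have : Submodule.span ℝ (Set.range fun j : Fin (k - i) => e ⟨i + j, by omega⟩) ≤ H₂ᗮ := by
      rw [hH₂, ← Submodule.isOrtho_iff_le, Submodule.isOrtho_span]
      rintro _ ⟨j, rfl⟩ _ ⟨j', rfl⟩
      have hj := j.isLt
      have hj' := j'.isLt
      simp only [inner_add_right, real_inner_smul_right, horth, Fin.mk.injEq]
      split_ifs <;> first | (exfalso; omega) | ring
    exact this hy₁
  have key : ∀ j : Fin i,
      Submodule.reflection H₂ (cos (θ j) • e ⟨j, by omega⟩ + sin (θ j) • e ⟨i + k - 1 - j, by omega⟩)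
      = cos (2 * α j - θ j) • e ⟨j, by omega⟩
        + sin (2 * α j - θ j) • e ⟨i + k - 1 - j, by omega⟩ := by
    intro j
    set v : EuclideanSpace ℝ (Fin n) :=
      cos (α j) • e ⟨j, by omega⟩ + sin (α j) • e ⟨i + k - 1 - j, by omega⟩ with hv
    set w : EuclideanSpace ℝ (Fin n) :=
      (-sin (α j)) • e ⟨j, by omega⟩ + cos (α j) • e ⟨i + k - 1 - j, by omega⟩ with hw
    have hvmem : v ∈ H₂ := by
      rw [hH₂]; exact Submodule.subset_span ⟨j, rfl⟩
    have hwmem : w ∈ H₂ᗮ := by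
      have : Submodule.span ℝ {w} ≤ H₂ᗮ := by
        rw [hH₂, ← Submodule.isOrtho_iff_le, Submodule.isOrtho_span]
        rintro _ rfl _ ⟨j', rfl⟩
        simp only [hw, inner_add_left, inner_add_right, real_inner_smul_left,
          real_inner_smul_right, horth, Fin.mk.injEq]
        have hj := j.isLt
        have hj' := j'.isLt
        by_cases hjj : j' = j
        · subst hjj
          split_ifs <;> first | (exfalso; omega) | ring
        · have hne : (j' : ℕ) ≠ (j : ℕ) := fun h => hjj (Fin.ext h)
          split_ifs <;> first | (exfalso; omega) | ring
      exact this (Submodule.mem_span_singleton_self w)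
    have hc : cos (θ j) = cos (θ j - α j) * cos (α j) - sin (θ j - α j) * sin (α j) := by
      rw [← cos_add]; congr 1; ring
    have hs : sin (θ j) = sin (θ j - α j) * cos (α j) + cos (θ j - α j) * sin (α j) := by
      rw [← sin_add]; congr 1; ring
    have hdecomp : cos (θ j) • e (⟨j, by omega⟩ : Fin n)
        + sin (θ j) • e ⟨i + k - 1 - j, by omega⟩
        = cos (θ j - α j) • v + sin (θ j - α j) • w := by
      rw [hc, hs]; simp only [hv, hw]; module
    rw [hdecomp, map_add, map_smul, map_smul,
      Submodule.reflection_mem_subspace_eq_self hvmem,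
      Submodule.reflection_mem_subspace_orthogonalComplement_eq_neg hwmem]
    have hc2 : cos (2 * α j - θ j)
        = cos (α j) * cos (θ j - α j) + sin (α j) * sin (θ j - α j) := by
      rw [← cos_sub]; congr 1; ring
    have hs2 : sin (2 * α j - θ j)
        = sin (α j) * cos (θ j - α j) - cos (α j) * sin (θ j - α j) := by
      rw [← sin_sub]; congr 1; ring
    rw [hc2, hs2]
    simp only [hv, hw]
    module
  subst hx
  rw [map_add, map_add, map_sum,
    Submodule.reflection_mem_subspace_orthogonalComplement_eq_neg hy₁',
    Submodule.reflection_mem_subspace_orthogonalComplement_eq_neg hy₂']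
  simp only [map_smul, key]
  abel
end

section
/- Let H_1, …, H_k be subspaces of R^n with 1 ≤ dim H_j ≤ n−2 for each j, and suppose H_1^⊥ + ⋯ + H_k^⊥ = R^n and that {H_1^⊥, …, H_k^⊥} cannot be partitioned into two mutually orthogonal nonempty subsets. If E ⊆ S^{n−1} is nonempty, closed, and for each j = 1, …, k and each x ∈ E one has S^{n−1} ∩ (H_j^⊥ + x) ⊆ E, then E = S^{n−1}. -/
open Module Metric Submodule
set_option linter.unusedSectionVars false

noncomputable section

variable {X : Type*} [NormedAddCommGroup X] [InnerProductSpace ℝ X] [FiniteDimensional ℝ X]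

local notation "⟪" x ", " y "⟫" => @inner ℝ _ _ x y

/-- The orthogonal projection as a map `X →L[ℝ] X`. -/
noncomputable def proj (W : Submodule ℝ X) : X →L[ℝ] X :=
  W.subtypeL.comp (orthogonalProjection W)

lemma proj_apply (W : Submodule ℝ X) (x : X) :
    proj W x = (orthogonalProjection W x : X) := rfl

lemma proj_mem (W : Submodule ℝ X) (x : X) : proj W x ∈ W :=
  (orthogonalProjection W x).2

lemma proj_eq_self (W : Submodule ℝ X) {x : X} (h : x ∈ W) : proj W x = x := by
  have := orthogonalProjection_mem_subspace_eq_self (K := W) ⟨x, h⟩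
  rw [proj_apply]
  rw [Subtype.ext_iff] at this
  simpa using this

lemma sub_proj_mem (W : Submodule ℝ X) (x : X) : x - proj W x ∈ Wᗮ :=
  Submodule.sub_starProjection_mem_orthogonal x

lemma proj_of_orth (W : Submodule ℝ X) {x : X} (h : x ∈ Wᗮ) : proj W x = 0 := by
  rw [proj_apply, orthogonalProjection_mem_subspace_orthogonalComplement_eq_zero h]
  rfl

lemma inner_proj_lr (W : Submodule ℝ X) (x y : X) :
    ⟪proj W x, y⟫ = ⟪x, proj W y⟫ :=
  Submodule.inner_starProjection_left_eq_right W x y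

/-- inner of a member of `W` with a member of `Wᗮ` is zero. -/
lemma inner_mem_orth (W : Submodule ℝ X) {u v : X} (hu : u ∈ W) (hv : v ∈ Wᗮ) :
    ⟪u, v⟫ = 0 :=
  ((Submodule.mem_orthogonal W v).1 hv) u hu

lemma norm_eq_of_sq_eq {a b : ℝ} (ha : 0 ≤ a) (hb : 0 ≤ b) (h : a ^ 2 = b ^ 2) : a = b := by
  nlinarith

lemma norm_sq_split (W : Submodule ℝ X) (x : X) :
    ‖x‖ ^ 2 = ‖x - proj W x‖ ^ 2 + ‖proj W x‖ ^ 2 := by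
  have hx : x = (x - proj W x) + proj W x := by abel
  have h0 : ⟪x - proj W x, proj W x⟫ = 0 := by
    rw [real_inner_comm]
    exact inner_mem_orth W (proj_mem W x) (sub_proj_mem W x)
  calc ‖x‖ ^ 2 = ‖(x - proj W x) + proj W x‖ ^ 2 := by rw [← hx]
    _ = ‖x - proj W x‖ ^ 2 + 2 * ⟪x - proj W x, proj W x⟫ + ‖proj W x‖ ^ 2 :=
        norm_add_sq_real _ _
    _ = ‖x - proj W x‖ ^ 2 + ‖proj W x‖ ^ 2 := by rw [h0]; ring

/-- norm of a "move" of `x` in direction `W`. -/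
lemma move_norm_sq (W : Submodule ℝ X) (x v : X) (hv : v ∈ W) :
    ‖x - proj W x + v‖ ^ 2 = ‖x - proj W x‖ ^ 2 + ‖v‖ ^ 2 := by
  have h0 : ⟪x - proj W x, v⟫ = 0 := by
    rw [real_inner_comm]
    exact inner_mem_orth W hv (sub_proj_mem W x)
  calc ‖x - proj W x + v‖ ^ 2
      = ‖x - proj W x‖ ^ 2 + 2 * ⟪x - proj W x, v⟫ + ‖v‖ ^ 2 := norm_add_sq_real _ _
    _ = ‖x - proj W x‖ ^ 2 + ‖v‖ ^ 2 := by rw [h0]; ring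

lemma move_norm_eq (W : Submodule ℝ X) (x v : X) (hv : v ∈ W) (hn : ‖v‖ = ‖proj W x‖) :
    ‖x - proj W x + v‖ = ‖x‖ := by
  apply norm_eq_of_sq_eq (norm_nonneg _) (norm_nonneg _)
  rw [move_norm_sq W x v hv, hn, norm_sq_split W x]

lemma proj_move (W : Submodule ℝ X) (x v : X) (hv : v ∈ W) :
    proj W (x - proj W x + v) = v := by
  rw [map_add, map_sub, proj_eq_self W (proj_mem W x), sub_self, zero_add, proj_eq_self W hv]

lemma move_diff (W : Submodule ℝ X) (x v : X) : x - proj W x + v - x = v - proj W x := by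
  abel


/-- `A` is invariant under moves along `W`. -/
def MoveInv (W : Submodule ℝ X) (A : Set X) : Prop :=
  ∀ x ∈ A, ∀ y : X, ‖y‖ = ‖x‖ → y - x ∈ W → y ∈ A

/-- one move along `W₁` or `W₂`. -/
def Step (W₁ W₂ : Submodule ℝ X) (z y : X) : Prop :=
  ‖y‖ = ‖z‖ ∧ (y - z ∈ W₁ ∨ y - z ∈ W₂)

def Reach (W₁ W₂ : Submodule ℝ X) (x y : X) : Prop :=
  Relation.ReflTransGen (Step W₁ W₂) x y

def RC (W₁ W₂ : Submodule ℝ X) (x : X) : Set X :=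
  closure {y | Reach W₁ W₂ x y}

variable {W₁ W₂ : Submodule ℝ X}

lemma step_symm {z y : X} (h : Step W₁ W₂ z y) : Step W₁ W₂ y z := by
  obtain ⟨hn, hm⟩ := h
  refine ⟨hn.symm, ?_⟩
  have : z - y = -(y - z) := by abel
  rw [this]
  exact hm.imp (fun h => neg_mem h) (fun h => neg_mem h)

lemma reach_symm {x y : X} (h : Reach W₁ W₂ x y) : Reach W₁ W₂ y x := by
  induction h with
  | refl => exact .refl
  | tail hab hbc ih => exact (Relation.ReflTransGen.single (step_symm hbc)).trans ih

/-- every step is realized by a global linear isometry (a reflection). -/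
lemma step_realize {z y : X} (h : Step W₁ W₂ z y) :
    ∃ g : X ≃ₗᵢ[ℝ] X, g z = y ∧ ∀ u : X, Step W₁ W₂ u (g u) := by
  obtain ⟨hn, hm⟩ := h
  by_cases hd : z - y = 0
  · refine ⟨LinearIsometryEquiv.refl ℝ X, ?_, fun u => ⟨rfl, Or.inl (by simp)⟩⟩
    simpa using (sub_eq_zero.1 hd)
  · set d := z - y with hddef
    have hdm : d ∈ W₁ ∨ d ∈ W₂ := by
      have : d = -(y - z) := by rw [hddef]; abel
      rw [this]
      exact hm.imp (fun h => neg_mem h) (fun h => neg_mem h)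
    set g := reflection ((ℝ ∙ d)ᗮ) with hg
    have hrefl : ∀ u : X, g u - u ∈ (ℝ ∙ d) := by
      intro u
      have happ : g u = 2 • (orthogonalProjection ((ℝ ∙ d)ᗮ) u : X) - u := reflection_apply u
      have h1 : u - (orthogonalProjection ((ℝ ∙ d)ᗮ) u : X) ∈ ((ℝ ∙ d)ᗮ)ᗮ :=
        Submodule.sub_starProjection_mem_orthogonal u
      rw [Submodule.orthogonal_orthogonal] at h1
      have : g u - u = -(2 : ℝ) • (u - (orthogonalProjection ((ℝ ∙ d)ᗮ) u : X)) := by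
        rw [happ]
        push_cast
        module
      rw [this]
      exact Submodule.smul_mem _ _ h1
    have hstep : ∀ u : X, Step W₁ W₂ u (g u) := by
      intro u
      refine ⟨g.norm_map u, ?_⟩
      have := hrefl u
      rcases hdm with h1 | h1
      · exact Or.inl ((Submodule.span_singleton_le_iff_mem d W₁).2 h1 this)
      · exact Or.inr ((Submodule.span_singleton_le_iff_mem d W₂).2 h1 this)
    refine ⟨g, ?_, hstep⟩
    -- g z = y
    have happ : g z = 2 • (orthogonalProjection ((ℝ ∙ d)ᗮ) z : X) - z := reflection_apply z
    have hval : (orthogonalProjection ((ℝ ∙ d)ᗮ) z : X) =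
        z - (orthogonalProjection (ℝ ∙ d) z : X) := Submodule.starProjection_orthogonal_val z
    have hsing : (orthogonalProjection (ℝ ∙ d) z : X) = (⟪d, z⟫ / ((‖d‖ : ℝ) ^ 2)) • d := by
      have := Submodule.starProjection_singleton ℝ (v := d) z
      simpa using this
    have hinner : 2 * ⟪d, z⟫ = ‖d‖ ^ 2 := by
      have hexp : ‖z - y‖ ^ 2 = ‖z‖ ^ 2 - 2 * ⟪z, y⟫ + ‖y‖ ^ 2 := norm_sub_sq_real z y
      have : ⟪d, z⟫ = ‖z‖ ^ 2 - ⟪z, y⟫ := by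
        rw [hddef, inner_sub_left, real_inner_self_eq_norm_sq, real_inner_comm]
      rw [this, hddef, hexp, hn]
      ring
    have hd2 : (‖d‖ : ℝ) ^ 2 ≠ 0 := by
      simpa using (norm_ne_zero_iff.2 hd)
    rw [happ, hval, hsing]
    have hcoef : (⟪d, z⟫ / ((‖d‖ : ℝ) ^ 2)) = 1 / 2 := by
      field_simp
      linarith [hinner]
    rw [hcoef, hddef]
    push_cast
    module

lemma reach_transport {x y : X} (h : Reach W₁ W₂ x y) (x' : X) :
    ∃ y', Reach W₁ W₂ x' y' ∧ ‖y' - y‖ = ‖x' - x‖ := by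
  induction h with
  | refl => exact ⟨x', .refl, rfl⟩
  | @tail b c hab hbc ih =>
    obtain ⟨b', hb', hnb⟩ := ih
    obtain ⟨g, hgz, hstep⟩ := step_realize hbc
    refine ⟨g b', hb'.tail (hstep b'), ?_⟩
    rw [← hgz, ← map_sub, g.norm_map]
    exact hnb

lemma reach_mem_RC {x y : X} (h : Reach W₁ W₂ x y) : y ∈ RC W₁ W₂ x :=
  subset_closure h

lemma self_mem_RC (x : X) : x ∈ RC W₁ W₂ x := reach_mem_RC .refl

lemma RC_step {x z y : X} (hz : z ∈ RC W₁ W₂ x) (hs : Step W₁ W₂ z y) :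
    y ∈ RC W₁ W₂ x := by
  obtain ⟨g, hgz, hg⟩ := step_realize hs
  rw [RC, mem_closure_iff_seq_limit] at hz ⊢
  obtain ⟨u, hu, hlim⟩ := hz
  refine ⟨fun n => g (u n), fun n => (hu n).tail (hg (u n)), ?_⟩
  have := (g.continuous.tendsto z).comp hlim
  rw [hgz] at this
  exact this

lemma RC_moveInv₁ (x : X) : MoveInv W₁ (RC W₁ W₂ x) :=
  fun z hz y hn hm => RC_step hz ⟨hn, Or.inl hm⟩

lemma RC_moveInv₂ (x : X) : MoveInv W₂ (RC W₁ W₂ x) :=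
  fun z hz y hn hm => RC_step hz ⟨hn, Or.inr hm⟩

lemma RC_subset {A : Set X} (hA : IsClosed A) (h₁ : MoveInv W₁ A) (h₂ : MoveInv W₂ A)
    {x : X} (hx : x ∈ A) : RC W₁ W₂ x ⊆ A := by
  apply closure_minimal ?_ hA
  intro y hy
  induction hy with
  | refl => exact hx
  | @tail b c hab hbc ih =>
    rcases hbc with ⟨hn, hm | hm⟩
    · exact h₁ b ih c hn hm
    · exact h₂ b ih c hn hm

lemma RC_symm {x y : X} (h : y ∈ RC W₁ W₂ x) : x ∈ RC W₁ W₂ y := by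
  rw [RC, mem_closure_iff_seq_limit] at h
  obtain ⟨u, hu, hlim⟩ := h
  rw [RC, mem_closure_iff_seq_limit]
  have hch : ∀ n, ∃ v, Reach W₁ W₂ y v ∧ ‖v - x‖ = ‖y - u n‖ :=
    fun n => reach_transport (reach_symm (hu n)) y
  choose v hv hnv using hch
  refine ⟨v, hv, ?_⟩
  rw [tendsto_iff_dist_tendsto_zero]
  simp only [dist_eq_norm, hnv]
  have : Filter.Tendsto (fun n => ‖y - u n‖) Filter.atTop (nhds ‖y - y‖) := by
    exact (Filter.Tendsto.const_sub y hlim).norm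
  simpa using this

lemma RC_mono {x z : X} (hz : z ∈ RC W₁ W₂ x) : RC W₁ W₂ z ⊆ RC W₁ W₂ x := by
  apply closure_minimal ?_ isClosed_closure
  intro w hw
  induction hw with
  | refl => exact hz
  | @tail b c hab hbc ih => exact RC_step ih hbc

lemma RC_norm {x z : X} (hz : z ∈ RC W₁ W₂ x) : ‖z‖ = ‖x‖ := by
  have hsub : RC W₁ W₂ x ⊆ {z : X | ‖z‖ = ‖x‖} := by
    apply closure_minimal ?_ (isClosed_eq continuous_norm continuous_const)
    intro w hw
    induction hw with
    | refl => rfl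
    | @tail b c hab hbc ih => rw [Set.mem_setOf_eq, hbc.1]; exact ih
  exact hsub hz

lemma RC_qpart {U : Submodule ℝ X} (hU₁ : W₁ ≤ U) (hU₂ : W₂ ≤ U)
    {x z : X} (hz : z ∈ RC W₁ W₂ x) : z - proj U z = x - proj U x := by
  have hsub : RC W₁ W₂ x ⊆ {z : X | z - proj U z = x - proj U x} := by
    apply closure_minimal ?_ (isClosed_eq (continuous_id.sub (proj U).continuous)
      continuous_const)
    intro w hw
    induction hw with
    | refl => rfl
    | @tail b c hab hbc ih =>
      show c - proj U c = x - proj U x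
      have hcb : c - b ∈ U := by
        rcases hbc.2 with hm | hm
        · exact hU₁ hm
        · exact hU₂ hm
      have : proj U (c - b) = c - b := proj_eq_self U hcb
      rw [map_sub] at this
      have ih' : b - proj U b = x - proj U x := ih
      have : c - proj U c = b - proj U b := by
        have h2 : proj U c - proj U b = c - b := this
        abel_nf
        linear_combination (norm := abel_nf) - h2
      rw [this]
      exact ih'
  exact hsub hz

/-- first-order condition for a maximum of `t ↦ ‖B + cos t • c + sin t • d‖` at `t = 0`. -/
lemma inner_deriv_max (B c d : X)
    (h : ∀ t : ℝ, ‖B + Real.cos t • c + Real.sin t • d‖ ≤ ‖B + c‖) :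
    ⟪d, B + c⟫ = 0 := by
  set F : ℝ → X := fun t => B + Real.cos t • c + Real.sin t • d with hFdef
  have hF0 : F 0 = B + c := by simp [hFdef]
  have hd : HasDerivAt F d 0 := by
    have h1 : HasDerivAt (fun t : ℝ => Real.cos t • c) ((-Real.sin 0) • c) 0 :=
      (Real.hasDerivAt_cos 0).smul_const c
    have h2 : HasDerivAt (fun t : ℝ => Real.sin t • d) ((Real.cos 0) • d) 0 :=
      (Real.hasDerivAt_sin 0).smul_const d
    have h3 := (h1.add h2).const_add B
    simpa [hFdef, add_assoc] using h3
  have hφ : HasDerivAt (fun t => (⟪F t, F t⟫ : ℝ)) (⟪F 0, d⟫ + ⟪d, F 0⟫) 0 :=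
    HasDerivAt.inner ℝ hd hd
  have hmax : IsLocalMax (fun t => (⟪F t, F t⟫ : ℝ)) 0 := by
    apply Filter.Eventually.of_forall
    intro t
    have h1 : ‖F t‖ ^ 2 ≤ ‖F 0‖ ^ 2 := by
      rw [hF0]
      exact pow_le_pow_left₀ (norm_nonneg _) (h t) 2
    simpa [real_inner_self_eq_norm_sq] using h1
  have h0 := hmax.deriv_eq_zero
  rw [hφ.deriv] at h0
  rw [hF0, real_inner_comm (B + c) d] at h0
  rw [add_self_eq_zero] at h0
  exact (real_inner_comm (B + c) d).trans h0

/-- if `u ∈ W` is orthogonal to every element of `W` orthogonal to `w ∈ W`,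
then `u` is a multiple of `w`. -/
lemma span_helper {W : Submodule ℝ X} {u w : X} (hu : u ∈ W) (hw : w ∈ W)
    (h : ∀ e ∈ W, ⟪e, w⟫ = 0 → ⟪u, e⟫ = 0) : ∃ t : ℝ, u = t • w := by
  by_cases hw0 : w = 0
  · have h0 : ⟪u, u⟫ = 0 := h u hu (by simp [hw0])
    exact ⟨0, by simpa using inner_self_eq_zero.1 h0⟩
  · set cc : ℝ := ⟪u, w⟫ / ⟪w, w⟫ with hcc
    have hww : (⟪w, w⟫ : ℝ) ≠ 0 := inner_self_ne_zero.2 hw0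
    set e : X := u - cc • w with he
    have heW : e ∈ W := sub_mem hu (smul_mem _ _ hw)
    have hew : ⟪e, w⟫ = 0 := by
      rw [he, inner_sub_left, real_inner_smul_left, hcc]
      field_simp
      ring
    have hue : ⟪u, e⟫ = 0 := h e heW hew
    have hee : ⟪e, e⟫ = 0 := by
      rw [he, inner_sub_left, real_inner_smul_left, hue]
      have : ⟪w, u - cc • w⟫ = 0 := by
        rw [real_inner_comm]; rw [he] at hew; exact hew
      rw [← he] at this ⊢
      rw [this]
      ring
    have : e = 0 := inner_self_eq_zero.1 hee
    exact ⟨cc, by rw [he] at this; rw [sub_eq_zero] at this; exact this⟩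

/-- Key lemma: a compact set invariant under moves along two non-orthogonal subspaces,
with constant "outer part" `q`, contains a point whose inner part lies in `W₁`. -/
lemma exists_sub_mem (W₁ W₂ : Submodule ℝ X) (h2 : 2 ≤ finrank ℝ W₁)
    (hno : ∃ u ∈ W₁, ∃ w ∈ W₂, ⟪u, w⟫ ≠ 0)
    (C : Set X) (hne : C.Nonempty) (hcp : IsCompact C)
    (h₁ : MoveInv W₁ C) (h₂ : MoveInv W₂ C)
    (q : X) (hq : ∀ z ∈ C, z - proj (W₁ ⊔ W₂) z = q) :
    ∃ z ∈ C, z - q ∈ W₁ := by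
  set U : Submodule ℝ X := W₁ ⊔ W₂ with hUdef
  have hU₁ : W₁ ≤ U := le_sup_left
  have hU₂ : W₂ ≤ U := le_sup_right
  -- a maximizer of ‖proj W₁ ⬝‖ on C
  obtain ⟨zs, hzs, hmax⟩ : ∃ zs ∈ C, ∀ w ∈ C, ‖proj W₁ w‖ ≤ ‖proj W₁ zs‖ := by
    obtain ⟨zs, hzs, hmax⟩ := hcp.exists_isMaxOn hne
      ((proj W₁).continuous.norm.continuousOn)
    exact ⟨zs, hzs, fun w hw => hmax hw⟩
  set r₁ : ℝ := ‖proj W₁ zs‖ with hr₁def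
  -- orthogonality contradiction helper
  have contra_orth : (∀ w ∈ W₂, proj W₁ w = 0) → False := by
    intro hall
    obtain ⟨u, hu, w, hw, hnz⟩ := hno
    apply hnz
    calc ⟪u, w⟫ = ⟪proj W₁ u, w⟫ := by rw [proj_eq_self W₁ hu]
      _ = ⟪u, proj W₁ w⟫ := inner_proj_lr W₁ u w
      _ = 0 := by rw [hall w hw, inner_zero_right]
  -- scaled vanishing: if proj W₁ vanishes on a sphere of positive radius in W₂, contradiction
  have sphere_vanish : ∀ ρ : ℝ, 0 < ρ → (∀ w ∈ W₂, ‖w‖ = ρ → proj W₁ w = 0) → False := by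
    intro ρ hρ hvan
    apply contra_orth
    intro w hw
    by_cases hw0 : w = 0
    · rw [hw0, map_zero]
    · have hnw : ‖w‖ ≠ 0 := norm_ne_zero_iff.2 hw0
      have hmem : (ρ / ‖w‖) • w ∈ W₂ := smul_mem _ _ hw
      have hnorm : ‖(ρ / ‖w‖) • w‖ = ρ := by
        rw [norm_smul, Real.norm_eq_abs, abs_div, abs_of_pos hρ, abs_of_nonneg (norm_nonneg w)]
        field_simp
      have := hvan _ hmem hnorm
      rw [map_smul] at this
      have hcoef : ρ / ‖w‖ ≠ 0 := div_ne_zero (ne_of_gt hρ) hnw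
      exact (smul_eq_zero.1 this).resolve_left hcoef
  by_cases hr : r₁ = 0
  · -- degenerate case: all W₁-projections vanish on C
    have hPz : ∀ z ∈ C, proj W₁ z = 0 := by
      intro z hz
      have := hmax z hz
      rw [hr] at this
      exact norm_le_zero_iff.1 this
    by_cases hex : ∃ z ∈ C, proj W₂ z ≠ 0
    · exfalso
      obtain ⟨z, hz, hpz⟩ := hex
      set ρ := ‖proj W₂ z‖ with hρdef
      have hρ : 0 < ρ := norm_pos_iff.2 hpz
      -- proj W₁ is constant on the ρ-sphere of W₂
      have hconst : ∀ w ∈ W₂, ‖w‖ = ρ → proj W₁ w = proj W₁ (proj W₂ z) := by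
        intro w hw hnw
        have hmove : z - proj W₂ z + w ∈ C :=
          h₂ z hz _ (move_norm_eq W₂ z w hw hnw)
            (by rw [move_diff]; exact sub_mem hw (proj_mem W₂ z))
        have h0 : proj W₁ (z - proj W₂ z + w) = 0 := hPz _ hmove
        rw [map_add, map_sub, hPz z hz, zero_sub, neg_add_eq_zero] at h0
        exact h0.symm
      apply sphere_vanish ρ hρ
      intro w hw hnw
      have h1 := hconst w hw hnw
      have h2' := hconst (-w) (neg_mem hw) (by rw [norm_neg]; exact hnw)
      rw [map_neg] at h2'
      have heq : proj W₁ w = - proj W₁ w := h1.trans h2'.symm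
      have h3 : (2 : ℝ) • proj W₁ w = 0 := by
        rw [two_smul]
        nth_rewrite 1 [heq]
        abel
      have := smul_eq_zero.1 h3
      exact this.resolve_left two_ne_zero
    · -- everything projects to 0 in both: C is a single point q, done
      push_neg at hex
      obtain ⟨z, hz⟩ := hne
      refine ⟨z, hz, ?_⟩
      have hzq : z - q = proj U z := by
        have := hq z hz
        rw [← this]
        abel
      have hUz : proj U z = 0 := by
        have hself : ⟪proj U z, proj U z⟫ = ⟪z, proj U z⟫ := by
          rw [inner_proj_lr U z (proj U z), proj_eq_self U (proj_mem U z)]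
        obtain ⟨a, ha, b, hb, hab⟩ := Submodule.mem_sup.1 (proj_mem U z)
        have hza : ⟪z, a⟫ = 0 := by
          rw [← proj_eq_self W₁ ha, ← inner_proj_lr W₁ z a, hPz z hz, inner_zero_left]
        have hzb : ⟪z, b⟫ = 0 := by
          rw [← proj_eq_self W₂ hb, ← inner_proj_lr W₂ z b, hex z hz, inner_zero_left]
        have : ⟪proj U z, proj U z⟫ = 0 := by
          rw [hself, ← hab, inner_add_right, hza, hzb]
          ring
        exact inner_self_eq_zero.1 this
      rw [hzq, hUz]
      exact zero_mem _
  · -- main case : r₁ > 0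
    have hr' : 0 < r₁ := lt_of_le_of_ne (norm_nonneg _) (Ne.symm hr)
    set m : X := proj W₂ (zs - proj W₁ zs) with hmdef
    have hmW₂ : m ∈ W₂ := proj_mem _ _
    -- the moved points z_v
    have hzv_mem : ∀ v ∈ W₁, ‖v‖ = r₁ → (zs - proj W₁ zs + v) ∈ C := by
      intro v hv hnv
      exact h₁ zs hzs _ (move_norm_eq W₁ zs v hv hnv)
        (by rw [move_diff]; exact sub_mem hv (proj_mem W₁ zs))
    have hzv_proj₁ : ∀ v ∈ W₁, proj W₁ (zs - proj W₁ zs + v) = v := fun v hv =>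
      proj_move W₁ zs v hv
    have hzv_proj₂ : ∀ v ∈ W₁, proj W₂ (zs - proj W₁ zs + v) = m + proj W₂ v := by
      intro v hv
      rw [map_add]
    -- KEY: first-order conditions
    have KEYV : ∀ v ∈ W₁, ‖v‖ = r₁ → (m = 0 ∨ ∃ t : ℝ, proj W₂ v = t • m) := by
      intro v hv hnv
      set zv := zs - proj W₁ zs + v with hzvdef
      have hzvC : zv ∈ C := hzv_mem v hv hnv
      set ws : X := proj W₂ zv with hwsdef
      have hws_eq : ws = m + proj W₂ v := hzv_proj₂ v hv
      have hwsW₂ : ws ∈ W₂ := proj_mem _ _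
      by_cases hws0 : ws = 0
      · right
        refine ⟨-1, ?_⟩
        have h4 : proj W₂ v + m = 0 := by
          rw [add_comm, ← hws_eq]
          exact hws0
        have h5 : proj W₂ v = -m := eq_neg_of_add_eq_zero_left h4
        rw [h5, neg_one_smul]
      · -- first-order orthogonality
        have hρ : 0 < ‖ws‖ := norm_pos_iff.2 hws0
        have FO : ∀ e ∈ W₂, ⟪e, ws⟫ = 0 → ⟪proj W₂ v, e⟫ = 0 := by
          intro e he hews
          by_cases he0 : e = 0
          · rw [he0, inner_zero_right]
          · have hne' : (0:ℝ) < ‖e‖ := norm_pos_iff.2 he0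
            set eu : X := (‖ws‖ / ‖e‖) • e with heudef
            have heuW₂ : eu ∈ W₂ := smul_mem _ _ he
            have heunorm : ‖eu‖ = ‖ws‖ := by
              rw [heudef, norm_smul, Real.norm_eq_abs, abs_div, abs_of_pos hρ,
                abs_of_pos hne']
              field_simp
            have heuws : ⟪eu, ws⟫ = 0 := by
              rw [heudef, real_inner_smul_left, hews, mul_zero]
            set B : X := proj W₁ zv - proj W₁ ws with hBdef
            set cc : X := proj W₁ ws with hccdef
            set dd : X := proj W₁ eu with hdddef
            have hBc : B + cc = v := by
              rw [hBdef, hccdef, sub_add_cancel, hzvdef]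
              exact hzv_proj₁ v hv
            have hmain : ∀ t : ℝ, ‖B + Real.cos t • cc + Real.sin t • dd‖ ≤ ‖B + cc‖ := by
              intro t
              set wt : X := Real.cos t • ws + Real.sin t • eu with hwtdef
              have hwtW₂ : wt ∈ W₂ := add_mem (smul_mem _ _ hwsW₂) (smul_mem _ _ heuW₂)
              have heuws2 : ⟪ws, eu⟫ = 0 := by
                rw [real_inner_comm]
                exact heuws
              have hwtnorm : ‖wt‖ = ‖ws‖ := by
                apply norm_eq_of_sq_eq (norm_nonneg _) (norm_nonneg _)
                rw [hwtdef, norm_add_sq_real, real_inner_smul_left, real_inner_smul_right,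
                  heuws2, norm_smul, norm_smul, Real.norm_eq_abs, Real.norm_eq_abs, heunorm,
                  mul_pow, mul_pow, sq_abs, sq_abs]
                nlinarith [Real.sin_sq_add_cos_sq t]
              have hytC : zv - proj W₂ zv + wt ∈ C :=
                h₂ zv hzvC _ (move_norm_eq W₂ zv wt hwtW₂ (by rw [hwtnorm, hwsdef]))
                  (by rw [move_diff]; exact sub_mem hwtW₂ (proj_mem W₂ zv))
              have hle := hmax _ hytC
              have hproj : proj W₁ (zv - proj W₂ zv + wt) =
                  B + Real.cos t • cc + Real.sin t • dd := by
                have h9 : proj W₁ (zv - proj W₂ zv + wt)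
                    = proj W₁ zv - proj W₁ (proj W₂ zv) + proj W₁ wt := by
                  rw [map_add, map_sub]
                have h10 : proj W₁ wt = Real.cos t • cc + Real.sin t • dd := by
                  rw [hwtdef, map_add, map_smul, map_smul]
                rw [h9, h10, hBdef, ← hwsdef, ← hccdef]
                abel
              rw [hproj] at hle
              rw [hBc, hnv]
              exact hle
            have h0 := inner_deriv_max B cc dd hmain
            rw [hBc] at h0
            -- h0 : ⟪dd, v⟫ = 0,  dd = (‖ws‖/‖e‖) • proj W₁ e
            have hdd : ⟪proj W₁ e, v⟫ = 0 := by
              rw [hdddef, heudef, map_smul, real_inner_smul_left] at h0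
              have hcoef : ‖ws‖ / ‖e‖ ≠ 0 := div_ne_zero (ne_of_gt hρ) (ne_of_gt hne')
              exact (mul_eq_zero.1 h0).resolve_left hcoef
            -- convert to ⟪proj W₂ v, e⟫ = 0
            calc ⟪proj W₂ v, e⟫ = ⟪v, proj W₂ e⟫ := inner_proj_lr W₂ v e
              _ = ⟪v, e⟫ := by rw [proj_eq_self W₂ he]
              _ = ⟪e, v⟫ := by rw [real_inner_comm]
              _ = ⟪e, proj W₁ v⟫ := by rw [proj_eq_self W₁ hv]
              _ = ⟪proj W₁ e, v⟫ := (inner_proj_lr W₁ e v).symm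
              _ = 0 := hdd
        -- span conclusion
        obtain ⟨t, ht⟩ := span_helper (proj_mem W₂ v) hwsW₂
          (fun e he hew => FO e he hew)
        rw [hws_eq] at ht
        by_cases ht1 : t = 1
        · left
          rw [ht1, one_smul] at ht
          exact right_eq_add.1 ht
        · right
          refine ⟨t / (1 - t), ?_⟩
          have h1t : (1 : ℝ) - t ≠ 0 := sub_ne_zero.2 (Ne.symm ht1)
          rw [smul_add] at ht
          have hsub : (1 - t) • proj W₂ v = t • m := by
            rw [sub_smul, one_smul]
            nth_rewrite 1 [ht]
            abel
          calc proj W₂ v = ((1 - t)⁻¹ * (1 - t)) • proj W₂ v := by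
                rw [inv_mul_cancel₀ h1t, one_smul]
            _ = (1 - t)⁻¹ • ((1 - t) • proj W₂ v) := by rw [mul_smul]
            _ = (1 - t)⁻¹ • (t • m) := by rw [hsub]
            _ = (t / (1 - t)) • m := by rw [smul_smul]; congr 1; field_simp
    -- now split on m = 0
    by_cases hm : m = 0
    · -- the maximizer itself works
      refine ⟨zs, hzs, ?_⟩
      have hzq : zs - q = proj U zs := by
        have := hq zs hzs
        rw [← this]
        abel
      set δ : X := proj U zs - proj W₁ zs with hδdef
      have hδU : δ ∈ U := sub_mem (proj_mem U zs) (hU₁ (proj_mem W₁ zs))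
      have hδ₁ : ∀ a ∈ W₁, ⟪δ, a⟫ = 0 := by
        intro a ha
        rw [hδdef, inner_sub_left]
        have e1 : ⟪proj U zs, a⟫ = ⟪zs, a⟫ := by
          rw [inner_proj_lr U zs a, proj_eq_self U (hU₁ ha)]
        have e2 : ⟪proj W₁ zs, a⟫ = ⟪zs, a⟫ := by
          rw [inner_proj_lr W₁ zs a, proj_eq_self W₁ ha]
        rw [e1, e2, sub_self]
      have hδ₂ : ∀ b ∈ W₂, ⟪δ, b⟫ = 0 := by
        intro b hb
        rw [hδdef, inner_sub_left]
        have e1 : ⟪proj U zs, b⟫ = ⟪zs, b⟫ := by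
          rw [inner_proj_lr U zs b, proj_eq_self U (hU₂ hb)]
        have e2 : ⟪zs, b⟫ - ⟪proj W₁ zs, b⟫ = ⟪zs - proj W₁ zs, b⟫ := by
          rw [inner_sub_left]
        rw [e1]
        rw [e2]
        have e3 : ⟪zs - proj W₁ zs, b⟫ = ⟪m, b⟫ := by
          rw [hmdef, inner_proj_lr W₂ _ b, proj_eq_self W₂ hb]
        rw [e3, hm, inner_zero_left]
      have hδ0 : δ = 0 := by
        obtain ⟨a, ha, b, hb, hab⟩ := Submodule.mem_sup.1 hδU
        have : ⟪δ, δ⟫ = 0 := by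
          nth_rewrite 2 [← hab]
          rw [inner_add_right, hδ₁ a ha, hδ₂ b hb, add_zero]
        exact inner_self_eq_zero.1 this
      have : proj U zs = proj W₁ zs := by
        have := hδ0
        rw [hδdef, sub_eq_zero] at this
        exact this
      rw [hzq, this]
      exact proj_mem W₁ zs
    · -- m ≠ 0 : derive a contradiction with non-orthogonality
      exfalso
      have hm2 : (⟪m, m⟫ : ℝ) ≠ 0 := inner_self_ne_zero.2 hm
      -- every v in W₁ has proj W₂ v a multiple of m
      have hPW : ∀ v ∈ W₁, ∃ t : ℝ, proj W₂ v = t • m := by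
        intro v hv
        by_cases hv0 : v = 0
        · exact ⟨0, by rw [hv0, map_zero, zero_smul]⟩
        · have hnv : (0:ℝ) < ‖v‖ := norm_pos_iff.2 hv0
          have hmem : (r₁ / ‖v‖) • v ∈ W₁ := smul_mem _ _ hv
          have hnorm : ‖(r₁ / ‖v‖) • v‖ = r₁ := by
            rw [norm_smul, Real.norm_eq_abs, abs_div, abs_of_pos hr', abs_of_pos hnv]
            field_simp
          rcases KEYV _ hmem hnorm with h | ⟨t, ht⟩
          · exact absurd h hm
          · rw [map_smul] at ht
            refine ⟨(‖v‖ / r₁) * t, ?_⟩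
            have h6 : proj W₂ v = (‖v‖ / r₁) • ((r₁ / ‖v‖) • proj W₂ v) := by
              rw [smul_smul]
              have hcc : (‖v‖ / r₁) * (r₁ / ‖v‖) = 1 := by field_simp
              rw [hcc, one_smul]
            rw [h6, ht, smul_smul]
      -- find v₀ ∈ W₁, nonzero, with proj W₂ v₀ = 0
      have hims : ∀ v : X, ⟪m, proj W₂ v⟫ = ⟪m, v⟫ := by
        intro v
        rw [← inner_proj_lr W₂ m v, proj_eq_self W₂ hmW₂]
      have hv₀ : ∃ v₀ ∈ W₁, v₀ ≠ 0 ∧ proj W₂ v₀ = 0 := by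
        have hfr1 : finrank ℝ (ℝ ∙ m) = 1 := finrank_span_singleton hm
        have hfro : finrank ℝ (ℝ ∙ m) + finrank ℝ ((ℝ ∙ m)ᗮ) = finrank ℝ X :=
          Submodule.finrank_add_finrank_orthogonal _
        have h3 := Submodule.finrank_sup_add_finrank_inf_eq W₁ ((ℝ ∙ m)ᗮ)
        have h4 : finrank ℝ ↥(W₁ ⊔ (ℝ ∙ m)ᗮ) ≤ finrank ℝ X := Submodule.finrank_le _
        have h6 : 2 ≤ finrank ℝ W₁ := h2
        have hKrank : 1 ≤ finrank ℝ ↥(W₁ ⊓ (ℝ ∙ m)ᗮ) := by omega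
        have hKne : (W₁ ⊓ (ℝ ∙ m)ᗮ) ≠ ⊥ := by
          intro hbot
          rw [hbot, finrank_bot] at hKrank
          omega
        obtain ⟨v₀, hv₀K, hv₀0⟩ := Submodule.exists_mem_ne_zero_of_ne_bot hKne
        refine ⟨v₀, hv₀K.1, hv₀0, ?_⟩
        have hmv₀ : ⟪m, v₀⟫ = 0 :=
          (Submodule.mem_orthogonal _ v₀).1 hv₀K.2 m (Submodule.mem_span_singleton_self m)
        obtain ⟨t, ht⟩ := hPW v₀ hv₀K.1
        have hz0 : ⟪m, proj W₂ v₀⟫ = 0 := by rw [hims]; exact hmv₀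
        rw [ht, real_inner_smul_right] at hz0
        rcases mul_eq_zero.1 hz0 with h | h
        · rw [ht, h, zero_smul]
        · exact absurd h hm2
      obtain ⟨v₀, hv₀W, hv₀ne, hv₀p⟩ := hv₀
      -- scale to norm r₁
      have hnv₀ : (0:ℝ) < ‖v₀‖ := norm_pos_iff.2 hv₀ne
      set v₁ : X := (r₁ / ‖v₀‖) • v₀ with hv₁def
      have hv₁W : v₁ ∈ W₁ := smul_mem _ _ hv₀W
      have hv₁n : ‖v₁‖ = r₁ := by
        rw [hv₁def, norm_smul, Real.norm_eq_abs, abs_div, abs_of_pos hr', abs_of_pos hnv₀]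
        field_simp
      have hv₁p : proj W₂ v₁ = 0 := by
        rw [hv₁def, map_smul, hv₀p, smul_zero]
      -- antipodal move at ±v₁ : get proj W₁ m = 0
      have hanti : ∀ v ∈ W₁, ‖v‖ = r₁ → proj W₂ v = 0 → ‖v - (2:ℝ) • proj W₁ m‖ ≤ r₁ := by
        intro v hv hnv hvp
        set zv := zs - proj W₁ zs + v with hzvdef
        have hzvC : zv ∈ C := hzv_mem v hv hnv
        have hws : proj W₂ zv = m := by
          rw [hzvdef, hzv_proj₂ v hv, hvp, add_zero]
        have hmove : zv - proj W₂ zv + (-m) ∈ C := by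
          apply h₂ zv hzvC
          · apply move_norm_eq W₂ zv (-m) (neg_mem hmW₂)
            rw [norm_neg, hws]
          · rw [move_diff]
            exact sub_mem (neg_mem hmW₂) (proj_mem W₂ zv)
        have hle := hmax _ hmove
        have hproj : proj W₁ (zv - proj W₂ zv + (-m)) = v - (2:ℝ) • proj W₁ m := by
          have h9 : proj W₁ (zv - proj W₂ zv + (-m))
              = proj W₁ zv - proj W₁ (proj W₂ zv) + proj W₁ (-m) := by
            rw [map_add, map_sub]
          rw [h9, hws, hzvdef, hzv_proj₁ v hv, map_neg]
          module
        rw [hproj] at hle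
        exact hle
      have hpm : proj W₁ m = 0 := by
        have h1 := hanti v₁ hv₁W hv₁n hv₁p
        have h2' := hanti (-v₁) (neg_mem hv₁W) (by rw [norm_neg]; exact hv₁n)
          (by rw [map_neg, hv₁p, neg_zero])
        have e2 : -v₁ - (2:ℝ) • proj W₁ m = -(v₁ + (2:ℝ) • proj W₁ m) := by abel
        rw [e2, norm_neg] at h2'
        have hs1 : ‖v₁ - (2:ℝ) • proj W₁ m‖ ^ 2 ≤ r₁ ^ 2 :=
          pow_le_pow_left₀ (norm_nonneg _) h1 2
        have hs2 : ‖v₁ + (2:ℝ) • proj W₁ m‖ ^ 2 ≤ r₁ ^ 2 :=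
          pow_le_pow_left₀ (norm_nonneg _) h2' 2
        have hadd := norm_add_sq_real v₁ ((2:ℝ) • proj W₁ m)
        have hsub := norm_sub_sq_real v₁ ((2:ℝ) • proj W₁ m)
        have hnv₁ : ‖v₁‖ ^ 2 = r₁ ^ 2 := by rw [hv₁n]
        have hneg : ‖(2:ℝ) • proj W₁ m‖ ^ 2 ≤ 0 := by linarith
        have hb0 : ‖(2:ℝ) • proj W₁ m‖ ^ 2 = 0 := le_antisymm hneg (sq_nonneg _)
        have h0 : ‖(2:ℝ) • proj W₁ m‖ = 0 := by
          exact pow_eq_zero_iff two_ne_zero |>.1 hb0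
        have := norm_eq_zero.1 h0
        have h2ne : (2:ℝ) ≠ 0 := two_ne_zero
        exact (smul_eq_zero.1 this).resolve_left h2ne
      -- final contradiction
      have hPWzero : ∀ v ∈ W₁, proj W₂ v = 0 := by
        intro v hv
        obtain ⟨t, ht⟩ := hPW v hv
        have hmv : ⟪m, proj W₂ v⟫ = 0 := by
          have e1 : ⟪m, proj W₂ v⟫ = ⟪m, v⟫ := by
            rw [← inner_proj_lr W₂ m v, proj_eq_self W₂ hmW₂]
          have e2 : ⟪m, v⟫ = 0 := by
            rw [← proj_eq_self W₁ hv, ← inner_proj_lr W₁ m v, hpm, inner_zero_left]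
          rw [e1, e2]
        rw [ht, real_inner_smul_right] at hmv
        have ht0 : t = 0 := by
          rcases mul_eq_zero.1 hmv with h | h
          · exact h
          · exact absurd h hm2
        rw [ht, ht0, zero_smul]
      obtain ⟨u, hu, w, hw, hnz⟩ := hno
      apply hnz
      calc ⟪u, w⟫ = ⟪u, proj W₂ w⟫ := by rw [proj_eq_self W₂ hw]
        _ = ⟪proj W₂ u, w⟫ := (inner_proj_lr W₂ u w).symm
        _ = 0 := by rw [hPWzero u hu, inner_zero_left]

/-- MERGE: if a closed set is invariant under moves along `W₁` (with `dim W₁ ≥ 2`) and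
along `W₂`, and `W₁, W₂` are not orthogonal, then it is invariant under moves
along `W₁ ⊔ W₂`. -/
lemma merge (W₁ W₂ : Submodule ℝ X) (h2 : 2 ≤ finrank ℝ W₁)
    (hno : ∃ u ∈ W₁, ∃ w ∈ W₂, ⟪u, w⟫ ≠ 0)
    (A : Set X) (hA : IsClosed A) (hm₁ : MoveInv W₁ A) (hm₂ : MoveInv W₂ A) :
    MoveInv (W₁ ⊔ W₂) A := by
  intro x₀ hx₀ y hny hyU
  set U : Submodule ℝ X := W₁ ⊔ W₂ with hUdef
  have hU₁ : W₁ ≤ U := le_sup_left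
  have hU₂ : W₂ ≤ U := le_sup_right
  set q : X := x₀ - proj U x₀ with hqdef
  -- the reach-closure of a point is a compact invariant set with constant outer part
  have hRC : ∀ x : X, ∃ z ∈ RC W₁ W₂ x, z - (x - proj U x) ∈ W₁ := by
    intro x
    have hcls : IsClosed (RC W₁ W₂ x) := isClosed_closure
    have hbdd : Bornology.IsBounded (RC W₁ W₂ x) := by
      apply Bornology.IsBounded.subset (Metric.isBounded_closedBall (x := (0:X)) (r := ‖x‖))
      intro z hz
      rw [Metric.mem_closedBall, dist_zero_right]
      rw [RC_norm hz]
    have hcp : IsCompact (RC W₁ W₂ x) := Metric.isCompact_of_isClosed_isBounded hcls hbdd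
    exact exists_sub_mem W₁ W₂ h2 hno (RC W₁ W₂ x) ⟨x, self_mem_RC x⟩ hcp
      (RC_moveInv₁ x) (RC_moveInv₂ x) (x - proj U x)
      (fun z hz => RC_qpart hU₁ hU₂ hz)
  obtain ⟨z₁, hz₁, hz₁W⟩ := hRC x₀
  obtain ⟨z₂, hz₂, hz₂W⟩ := hRC y
  -- y has the same outer part and norm as x₀
  have hyq : y - proj U y = q := by
    have h5 : proj U (y - x₀) = y - x₀ := proj_eq_self U hyU
    rw [map_sub] at h5
    rw [hqdef]
    have : y - proj U y - (x₀ - proj U x₀) = (y - x₀) - (proj U y - proj U x₀) := by abel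
    have h6 : y - proj U y - (x₀ - proj U x₀) = 0 := by
      rw [this, h5, sub_self]
    have := sub_eq_zero.1 h6
    exact this
  rw [hyq] at hz₂W
  -- z₂ is a W₁-move of z₁, hence z₂ ∈ RC x₀
  have hz₂x₀ : z₂ ∈ RC W₁ W₂ x₀ := by
    apply RC_moveInv₁ x₀ z₁ hz₁ z₂
    · rw [RC_norm hz₂, RC_norm hz₁, hny]
    · have : z₂ - z₁ = (z₂ - q) - (z₁ - q) := by abel
      rw [this]
      exact sub_mem hz₂W hz₁W
  -- conclude : y ∈ RC x₀ ⊆ A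
  have hy : y ∈ RC W₁ W₂ x₀ := RC_mono hz₂x₀ (RC_symm hz₂)
  exact RC_subset hA hm₁ hm₂ hx₀ hy

end

open Module Metric Submodule in
/-- Theorem 4.1, (i) ⇒ (ii): if `H₁^⊥ + ⋯ + H_k^⊥ = ℝⁿ` and the family `{H_j^⊥}` cannot be
split into two mutually orthogonal nonempty subfamilies, then any nonempty closed subset `E`
of the sphere containing, with each of its points `x`, the whole section
`Sⁿ⁻¹ ∩ (H_j^⊥ + x)` for every `j`, is the whole sphere. -/
theorem full_sphere_of_rotational_symmetries (n k : ℕ)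
    (H : Fin k → Submodule ℝ (EuclideanSpace ℝ (Fin n)))
    (hdim : ∀ j, 1 ≤ Module.finrank ℝ (H j) ∧ Module.finrank ℝ (H j) ≤ n - 2)
    (hspan : ⨆ j, (H j)ᗮ = ⊤)
    (hpart : ¬ ∃ I : Set (Fin k), I.Nonempty ∧ Iᶜ.Nonempty ∧
      ∀ j ∈ I, ∀ l ∈ Iᶜ, ∀ u ∈ (H j)ᗮ, ∀ v ∈ (H l)ᗮ, (inner ℝ u v : ℝ) = 0)
    (E : Set (EuclideanSpace ℝ (Fin n))) (hne : E.Nonempty) (hcl : IsClosed E)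
    (hsub : E ⊆ Metric.sphere 0 1)
    (hsec : ∀ j, ∀ x ∈ E, ∀ y ∈ Metric.sphere (0 : EuclideanSpace ℝ (Fin n)) 1,
      y - x ∈ (H j)ᗮ → y ∈ E) :
    E = Metric.sphere 0 1 := by
  classical
  obtain ⟨x₀, hx₀⟩ := hne
  have hx₀n : ‖x₀‖ = 1 := mem_sphere_zero_iff_norm.1 (hsub hx₀)
  -- move invariance of E along each (H j)ᗮ
  have hmv : ∀ j, MoveInv ((H j)ᗮ) E := by
    intro j x hx y hn hm
    have hxn : ‖x‖ = 1 := mem_sphere_zero_iff_norm.1 (hsub hx)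
    exact hsec j x hx y (mem_sphere_zero_iff_norm.2 (by rw [hn, hxn])) hm
  -- degenerate case k = 0
  rcases Nat.eq_zero_or_pos k with hk | hk
  · exfalso
    subst hk
    rw [iSup_of_empty] at hspan
    have : x₀ ∈ (⊥ : Submodule ℝ (EuclideanSpace ℝ (Fin n))) := by
      rw [hspan]; trivial
    rw [Submodule.mem_bot] at this
    rw [this] at hx₀n
    simp at hx₀n
  -- now k ≥ 1, and n ≥ 3
  set j₀ : Fin k := ⟨0, hk⟩
  have hn3 : 3 ≤ n := by
    have h1 := (hdim j₀).1
    have h2 := (hdim j₀).2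
    omega
  have hfr : ∀ j, 2 ≤ finrank ℝ ((H j)ᗮ) := by
    intro j
    have h1 := (hdim j).1
    have h2 := (hdim j).2
    have h3 := Submodule.finrank_add_finrank_orthogonal (H j)
    rw [finrank_euclideanSpace_fin] at h3
    omega
  -- growing a move-invariant subspace
  have grow : ∀ (d : ℕ) (W : Submodule ℝ (EuclideanSpace ℝ (Fin n))),
      n - finrank ℝ W ≤ d → 2 ≤ finrank ℝ W → MoveInv W E → (H j₀)ᗮ ≤ W →
      ∃ W', MoveInv W' E ∧ ∀ j, (H j)ᗮ ≤ W' := by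
    intro d
    induction d with
    | zero =>
      intro W hcod hfrW hmvW _
      have hWle := Submodule.finrank_le W
      rw [finrank_euclideanSpace_fin] at hWle
      have hWeq : finrank ℝ W = n := by omega
      have : W = ⊤ := Submodule.eq_top_of_finrank_eq (by
        rw [hWeq, finrank_euclideanSpace_fin])
      refine ⟨W, hmvW, fun j => ?_⟩
      rw [this]
      exact le_top
    | succ d ih =>
      intro W hcod hfrW hmvW hj₀
      by_cases hall : ∀ j, (H j)ᗮ ≤ W
      · exact ⟨W, hmvW, hall⟩
      · push_neg at hall
        -- find an edge from W to a non-contained subspace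
        have hedge : ∃ l, ¬ (H l)ᗮ ≤ W ∧ ∃ u ∈ W, ∃ w ∈ (H l)ᗮ, (inner ℝ u w : ℝ) ≠ 0 := by
          by_contra hcon
          push_neg at hcon
          apply hpart
          refine ⟨{j | (H j)ᗮ ≤ W}, ⟨j₀, hj₀⟩, ?_, ?_⟩
          · obtain ⟨l, hl⟩ := hall
            exact ⟨l, hl⟩
          · intro j hj l hl u hu v hv
            have := hcon l hl
            by_contra hne0
            exact hne0 (this u (hj hu) v hv)
        obtain ⟨l, hlW, hedge⟩ := hedge
        set W' : Submodule ℝ (EuclideanSpace ℝ (Fin n)) := W ⊔ (H l)ᗮ with hW'def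
        have hmvW' : MoveInv W' E := merge W ((H l)ᗮ) hfrW hedge E hcl hmvW (hmv l)
        have hlt : W < W' := by
          apply lt_of_le_of_ne le_sup_left
          intro heq
          apply hlW
          rw [heq]
          exact le_sup_right
        have hfrlt : finrank ℝ W < finrank ℝ W' := Submodule.finrank_lt_finrank_of_lt hlt
        have hW'le := Submodule.finrank_le W'
        rw [finrank_euclideanSpace_fin] at hW'le
        exact ih W' (by omega) (by omega) hmvW' (le_trans hj₀ le_sup_left)
  obtain ⟨W', hmvW', hallW'⟩ := grow n ((H j₀)ᗮ) (by omega) (hfr j₀) (hmv j₀) le_rfl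
  have hW'top : W' = ⊤ := by
    apply eq_top_iff.2
    rw [← hspan]
    exact iSup_le hallW'
  rw [hW'top] at hmvW'
  apply Set.Subset.antisymm hsub
  intro y hy
  have hyn : ‖y‖ = 1 := mem_sphere_zero_iff_norm.1 hy
  exact hmvW' x₀ hx₀ y (by rw [hyn, hx₀n]) trivial
end

section
/- Let n ≥ 3 and let H_1, H_2 be distinct 1-dimensional subspaces of R^n. If F ⊆ R^n is closed and invariant under every rotation of R^n that fixes H_1 pointwise and under every rotation that fixes H_2 pointwise, then F is a union of spheres centered at the origin (i.e., F is invariant under the whole group O(n)). -/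
open Module Submodule

variable {n : ℕ}

lemma rot_fix_line (hn : 3 ≤ n) (u p q : EuclideanSpace ℝ (Fin n))
    (hnorm : ‖p‖ = ‖q‖) (hip : inner ℝ u p = (inner ℝ u q : ℝ)) :
    ∃ g : EuclideanSpace ℝ (Fin n) ≃ₗᵢ[ℝ] EuclideanSpace ℝ (Fin n),
      LinearMap.det (g.toLinearEquiv : EuclideanSpace ℝ (Fin n) →ₗ[ℝ] EuclideanSpace ℝ (Fin n)) = 1 ∧
      (∀ x ∈ (ℝ ∙ u), g x = x) ∧ g p = q := by
  by_cases hpq : p = q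
  · refine ⟨LinearIsometryEquiv.refl ℝ _, ?_, fun x _ => rfl, hpq⟩
    have : ((LinearIsometryEquiv.refl ℝ (EuclideanSpace ℝ (Fin n))).toLinearEquiv :
        EuclideanSpace ℝ (Fin n) →ₗ[ℝ] EuclideanSpace ℝ (Fin n)) = LinearMap.id := rfl
    rw [this, LinearMap.det_id]
  · set d := p - q with hd
    have hd0 : d ≠ 0 := sub_ne_zero.mpr hpq
    have hK : ((ℝ ∙ u) ⊔ (ℝ ∙ q) : Submodule ℝ (EuclideanSpace ℝ (Fin n)))ᗮ ≠ ⊥ := by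
      intro hbot
      have h1 := Submodule.finrank_add_finrank_orthogonal
        ((ℝ ∙ u) ⊔ (ℝ ∙ q) : Submodule ℝ (EuclideanSpace ℝ (Fin n)))
      rw [hbot, finrank_bot, add_zero, finrank_euclideanSpace_fin] at h1
      have h2 : finrank ℝ ((ℝ ∙ u) ⊔ (ℝ ∙ q) : Submodule ℝ (EuclideanSpace ℝ (Fin n)))
          ≤ finrank ℝ (ℝ ∙ u : Submodule ℝ (EuclideanSpace ℝ (Fin n)))
            + finrank ℝ (ℝ ∙ q : Submodule ℝ (EuclideanSpace ℝ (Fin n))) :=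
        Submodule.finrank_add_le_finrank_add_finrank _ _
      have h3 : finrank ℝ (ℝ ∙ u : Submodule ℝ (EuclideanSpace ℝ (Fin n))) ≤ 1 := by
        rcases eq_or_ne u 0 with h | h
        · subst h; rw [Submodule.span_zero_singleton, finrank_bot]; omega
        · exact le_of_eq (finrank_span_singleton h)
      have h4 : finrank ℝ (ℝ ∙ q : Submodule ℝ (EuclideanSpace ℝ (Fin n))) ≤ 1 := by
        rcases eq_or_ne q 0 with h | h
        · subst h; rw [Submodule.span_zero_singleton, finrank_bot]; omega
        · exact le_of_eq (finrank_span_singleton h)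
      omega
    obtain ⟨w, hwK, hw0⟩ := Submodule.exists_mem_ne_zero_of_ne_bot hK
    have hmem := (Submodule.mem_orthogonal _ w).mp hwK
    have hwu : (inner ℝ u w : ℝ) = 0 :=
      hmem u (Submodule.mem_sup_left (Submodule.mem_span_singleton_self u))
    have hwq : (inner ℝ q w : ℝ) = 0 :=
      hmem q (Submodule.mem_sup_right (Submodule.mem_span_singleton_self q))
    have hud : (inner ℝ d u : ℝ) = 0 := by
      rw [real_inner_comm, hd, inner_sub_right, hip, sub_self]
    set r₁ := reflection ((ℝ ∙ d)ᗮ) with hr₁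
    set r₂ := reflection ((ℝ ∙ w)ᗮ) with hr₂
    refine ⟨r₁.trans r₂, ?_, ?_, ?_⟩
    · have det1 : LinearMap.det (r₁.toLinearMap) = -1 := by
        rw [hr₁, det_reflection, Submodule.orthogonal_orthogonal, finrank_span_singleton hd0,
          pow_one]
      have det2 : LinearMap.det (r₂.toLinearMap) = -1 := by
        rw [hr₂, det_reflection, Submodule.orthogonal_orthogonal, finrank_span_singleton hw0,
          pow_one]
      have hco : ((r₁.trans r₂).toLinearEquiv :
          EuclideanSpace ℝ (Fin n) →ₗ[ℝ] EuclideanSpace ℝ (Fin n))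
          = r₂.toLinearMap ∘ₗ r₁.toLinearMap := rfl
      rw [hco, LinearMap.det_comp, det1, det2]; norm_num
    · intro x hx
      obtain ⟨c, rfl⟩ := Submodule.mem_span_singleton.mp hx
      have h1 : r₁ u = u := reflection_mem_subspace_eq_self
        (Submodule.mem_orthogonal_singleton_iff_inner_right.mpr hud)
      have h2 : r₂ u = u := reflection_mem_subspace_eq_self
        (Submodule.mem_orthogonal_singleton_iff_inner_left.mpr hwu)
      simp [LinearIsometryEquiv.trans_apply, LinearIsometryEquiv.map_smul, h1, h2]
    · have h1 : r₁ p = q := reflection_sub hnorm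
      have h2 : r₂ q = q := reflection_mem_subspace_eq_self
        (Submodule.mem_orthogonal_singleton_iff_inner_left.mpr hwq)
      simp [LinearIsometryEquiv.trans_apply, h1, h2]

section helpers

variable {n : ℕ}

lemma eq_of_sq_eq {x r : ℝ} (hx : 0 ≤ x) (hr : 0 ≤ r) (h : x ^ 2 = r ^ 2) : x = r := by
  nlinarith

lemma exists_unit_ortho (hn : 3 ≤ n) (a b : EuclideanSpace ℝ (Fin n)) :
    ∃ e : EuclideanSpace ℝ (Fin n), ‖e‖ = 1 ∧ inner ℝ a e = (0:ℝ) ∧ inner ℝ b e = (0:ℝ) := by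
  have hK : ((ℝ ∙ a) ⊔ (ℝ ∙ b) : Submodule ℝ (EuclideanSpace ℝ (Fin n)))ᗮ ≠ ⊥ := by
    intro hbot
    have h1 := Submodule.finrank_add_finrank_orthogonal
      ((ℝ ∙ a) ⊔ (ℝ ∙ b) : Submodule ℝ (EuclideanSpace ℝ (Fin n)))
    rw [hbot, finrank_bot, add_zero, finrank_euclideanSpace_fin] at h1
    have h2 : finrank ℝ ((ℝ ∙ a) ⊔ (ℝ ∙ b) : Submodule ℝ (EuclideanSpace ℝ (Fin n)))
        ≤ finrank ℝ (ℝ ∙ a : Submodule ℝ (EuclideanSpace ℝ (Fin n)))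
          + finrank ℝ (ℝ ∙ b : Submodule ℝ (EuclideanSpace ℝ (Fin n))) :=
      Submodule.finrank_add_le_finrank_add_finrank _ _
    have h3 : finrank ℝ (ℝ ∙ a : Submodule ℝ (EuclideanSpace ℝ (Fin n))) ≤ 1 := by
      rcases eq_or_ne a 0 with h | h
      · subst h; rw [Submodule.span_zero_singleton, finrank_bot]; omega
      · exact le_of_eq (finrank_span_singleton h)
    have h4 : finrank ℝ (ℝ ∙ b : Submodule ℝ (EuclideanSpace ℝ (Fin n))) ≤ 1 := by
      rcases eq_or_ne b 0 with h | h
      · subst h; rw [Submodule.span_zero_singleton, finrank_bot]; omega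
      · exact le_of_eq (finrank_span_singleton h)
    omega
  obtain ⟨w, hwK, hw0⟩ := Submodule.exists_mem_ne_zero_of_ne_bot hK
  have hmem := (Submodule.mem_orthogonal _ w).mp hwK
  have hwa : (inner ℝ a w : ℝ) = 0 :=
    hmem a (Submodule.mem_sup_left (Submodule.mem_span_singleton_self a))
  have hwb : (inner ℝ b w : ℝ) = 0 :=
    hmem b (Submodule.mem_sup_right (Submodule.mem_span_singleton_self b))
  refine ⟨‖w‖⁻¹ • w, ?_, ?_, ?_⟩
  · rw [norm_smul, norm_inv, norm_norm, inv_mul_cancel₀ (norm_ne_zero_iff.mpr hw0)]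
  · rw [real_inner_smul_right, hwa, mul_zero]
  · rw [real_inner_smul_right, hwb, mul_zero]

lemma norm_comb {u m e : EuclideanSpace ℝ (Fin n)}
    (huu : inner ℝ u u = (1:ℝ)) (hmm : inner ℝ m m = (1:ℝ)) (hee : inner ℝ e e = (1:ℝ))
    (hum : inner ℝ u m = (0:ℝ)) (hue : inner ℝ u e = (0:ℝ)) (hme : inner ℝ m e = (0:ℝ))
    {a b c r : ℝ} (h : a ^ 2 + b ^ 2 + c ^ 2 = r ^ 2) (hr : 0 ≤ r) :
    ‖a • u + b • m + c • e‖ = r := by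
  have hmu : inner ℝ m u = (0:ℝ) := by rw [real_inner_comm, hum]
  have heu : inner ℝ e u = (0:ℝ) := by rw [real_inner_comm, hue]
  have hem : inner ℝ e m = (0:ℝ) := by rw [real_inner_comm, hme]
  have h2 : ‖a • u + b • m + c • e‖ ^ 2 = r ^ 2 := by
    rw [← real_inner_self_eq_norm_sq]
    simp only [inner_add_left, inner_add_right, real_inner_smul_left, real_inner_smul_right,
      huu, hmm, hee, hum, hue, hme, hmu, heu, hem]
    ring_nf
    linarith [h]
  exact eq_of_sq_eq (norm_nonneg _) hr h2

end helpers

set_option maxHeartbeats 1000000 in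
lemma reachUp {n : ℕ} {F : Set (EuclideanSpace ℝ (Fin n))} (hF : IsClosed F)
    {u m e : EuclideanSpace ℝ (Fin n)}
    (huu : inner ℝ u u = (1:ℝ)) (hmm : inner ℝ m m = (1:ℝ)) (hee : inner ℝ e e = (1:ℝ))
    (hum : inner ℝ u m = (0:ℝ)) (hue : inner ℝ u e = (0:ℝ)) (hme : inner ℝ m e = (0:ℝ))
    {α β : ℝ} (hβ : 0 < β)
    (hu : ∀ z z' : EuclideanSpace ℝ (Fin n), ‖z‖ = ‖z'‖ → inner ℝ u z = (inner ℝ u z' : ℝ) →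
      z ∈ F → z' ∈ F)
    (hv : ∀ z z' : EuclideanSpace ℝ (Fin n), ‖z‖ = ‖z'‖ →
      inner ℝ (α • u + β • m) z = (inner ℝ (α • u + β • m) z' : ℝ) → z ∈ F → z' ∈ F)
    {r : ℝ} (hr : 0 < r) {c₀ : ℝ} (hc₀ : |c₀| ≤ r)
    (hstart : ∀ z : EuclideanSpace ℝ (Fin n), ‖z‖ = r → inner ℝ u z = (c₀ : ℝ) → z ∈ F) :
    ∀ c ∈ Set.Icc c₀ r, ∀ z : EuclideanSpace ℝ (Fin n), ‖z‖ = r → inner ℝ u z = (c : ℝ) →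
      z ∈ F := by
  set P : ℝ → Prop := fun c => ∀ z : EuclideanSpace ℝ (Fin n), ‖z‖ = r →
    inner ℝ u z = (c : ℝ) → z ∈ F with hP
  set ψ : ℝ → EuclideanSpace ℝ (Fin n) :=
    fun c => c • u + (0:ℝ) • m + Real.sqrt (r^2 - c^2) • e with hψ
  have hψnorm : ∀ c : ℝ, |c| ≤ r → ‖ψ c‖ = r := by
    intro c hc
    have h0 : 0 ≤ r^2 - c^2 := by
      have := abs_nonneg c; nlinarith [sq_abs c]
    exact norm_comb huu hmm hee hum hue hme
      (by rw [Real.sq_sqrt h0]; ring) hr.le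
  have hψinner : ∀ c : ℝ, inner ℝ u (ψ c) = (c : ℝ) := by
    intro c
    simp only [hψ, inner_add_right, real_inner_smul_right, huu, hum, hue]
    ring
  have hψP : ∀ c : ℝ, |c| ≤ r → (ψ c ∈ F ↔ P c) := by
    intro c hc
    constructor
    · intro hmem z hz hz'
      exact hu (ψ c) z (by rw [hψnorm c hc, hz]) (by rw [hψinner c, hz']) hmem
    · intro hp
      exact hp (ψ c) (hψnorm c hc) (hψinner c)
  have hstep : ∀ c c' : ℝ, |c| ≤ r → |c'| ≤ r → α^2 * (c - c')^2 ≤ β^2 * (r^2 - c'^2) →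
      P c → P c' := by
    intro c c' hc hc' hcond hp
    have hzF : ψ c ∈ F := (hψP c hc).mpr hp
    set a' : ℝ := α * (c - c') / β with ha'
    have ha'sq : a'^2 ≤ r^2 - c'^2 := by
      rw [ha', div_pow]
      rw [div_le_iff₀ (by positivity)]
      calc (α * (c - c'))^2 = α^2 * (c - c')^2 := by ring
      _ ≤ β^2 * (r^2 - c'^2) := hcond
      _ = (r^2 - c'^2) * β^2 := by ring
    set b' : ℝ := Real.sqrt (r^2 - c'^2 - a'^2) with hb'
    set w : EuclideanSpace ℝ (Fin n) := c' • u + a' • m + b' • e with hw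
    have hwnorm : ‖w‖ = r := norm_comb huu hmm hee hum hue hme
      (by rw [hb', Real.sq_sqrt (by linarith)]; ring) hr.le
    have hmu : inner ℝ m u = (0:ℝ) := by rw [real_inner_comm, hum]
    have hmec : inner ℝ m e = (0:ℝ) := hme
    have hvz : inner ℝ (α • u + β • m) (ψ c) = (α * c : ℝ) := by
      simp only [hψ, inner_add_left, inner_add_right, real_inner_smul_left,
        real_inner_smul_right, huu, hmm, hum, hue, hme, hmu]
      ring
    have hvw : inner ℝ (α • u + β • m) w = (α * c : ℝ) := by
      simp only [hw, inner_add_left, inner_add_right, real_inner_smul_left,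
        real_inner_smul_right, huu, hmm, hum, hue, hme, hmu]
      rw [ha']
      field_simp
      ring
    have hwF : w ∈ F := hv (ψ c) w (by rw [hψnorm c hc, hwnorm]) (by rw [hvz, hvw]) hzF
    intro z hz hz'
    refine hu w z (by rw [hwnorm, hz]) ?_ hwF
    have hwu : inner ℝ u w = (c' : ℝ) := by
      simp only [hw, inner_add_right, real_inner_smul_right, huu, hum, hue]
      ring
    rw [hwu, hz']
  -- the closed set of good latitudes
  set T : Set ℝ := Set.Icc (-r) r ∩ ψ ⁻¹' F with hT
  have hTclosed : IsClosed T := by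
    apply IsClosed.inter isClosed_Icc
    apply IsClosed.preimage ?_ hF
    refine Continuous.add (Continuous.add ?_ continuous_const) ?_
    · exact continuous_id.smul continuous_const
    · refine Continuous.smul (f := fun c : ℝ => Real.sqrt (r^2 - c^2)) ?_ continuous_const
      exact Real.continuous_sqrt.comp (continuous_const.sub (continuous_pow 2))
  have hTP : ∀ c ∈ T, P c := by
    rintro c ⟨hc1, hc2⟩
    exact (hψP c (abs_le.mpr ⟨hc1.1, hc1.2⟩)).mp hc2
  have hPT : ∀ c : ℝ, |c| ≤ r → P c → c ∈ T := by
    intro c hc hp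
    exact ⟨Set.mem_Icc.mpr ⟨(abs_le.mp hc).1, (abs_le.mp hc).2⟩, (hψP c hc).mpr hp⟩
  -- the sup argument
  set S : Set ℝ := {t | t ∈ Set.Icc c₀ r ∧ Set.Icc c₀ t ⊆ T} with hS
  have hc₀T : c₀ ∈ T := hPT c₀ hc₀ hstart
  have hc₀S : c₀ ∈ S := ⟨⟨le_refl _, (abs_le.mp hc₀).2⟩, by
    intro t ht; rw [Set.mem_Icc] at ht; have : t = c₀ := le_antisymm ht.2 ht.1
    rw [this]; exact hc₀T⟩
  have hS0 : S.Nonempty := ⟨c₀, hc₀S⟩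
  have hSbdd : BddAbove S := ⟨r, fun t ht => ht.1.2⟩
  set s : ℝ := sSup S with hs
  have hc₀s : c₀ ≤ s := le_csSup hSbdd hc₀S
  have hsr : s ≤ r := csSup_le hS0 fun t ht => ht.1.2
  have hST : S ⊆ T := fun t ht => ht.2 ⟨ht.1.1, le_refl _⟩
  have hsub : Set.Icc c₀ s ⊆ T := by
    intro t ht
    rcases lt_or_eq_of_le ht.2 with h | h
    · obtain ⟨t', ht'S, htt'⟩ := exists_lt_of_lt_csSup hS0 h
      exact ht'S.2 ⟨ht.1, htt'.le⟩
    · rw [h]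
      have : s ∈ closure T := closure_mono hST (csSup_mem_closure hS0 hSbdd)
      rwa [hTclosed.closure_eq] at this
  have hseq : s = r := by
    by_contra hne
    have hslt : s < r := lt_of_le_of_ne hsr hne
    obtain ⟨ε, hεpos, hεle, hεkey⟩ :
        ∃ ε : ℝ, 0 < ε ∧ ε ≤ (r - s)/2 ∧ α^2 * ε ≤ β^2 * (r - s)/2 := by
      rcases eq_or_ne α 0 with hα | hα
      · refine ⟨(r - s)/2, by linarith, le_refl _, ?_⟩
        rw [hα]
        have : (0:ℝ) ≤ β^2 * (r - s)/2 := by nlinarith [sq_nonneg β]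
        nlinarith
      · have hα2 : 0 < α^2 := by positivity
        have hrs : 0 < r - s := by linarith
        refine ⟨min ((r - s)/2) (β^2 * (r - s) / (2 * α^2)), ?_, min_le_left _ _, ?_⟩
        · apply lt_min
          · linarith
          · positivity
        · have heq : α^2 * (β^2 * (r - s) / (2 * α^2)) = β^2 * (r - s)/2 := by
            field_simp
          calc α^2 * min ((r - s)/2) (β^2 * (r - s) / (2 * α^2))
              ≤ α^2 * (β^2 * (r - s) / (2 * α^2)) :=
            mul_le_mul_of_nonneg_left (min_le_right _ _) (sq_nonneg α)
          _ = β^2 * (r - s)/2 := heq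
    have hsε : s + ε ∈ S := by
      constructor
      · constructor
        · linarith
        · linarith
      · intro t ht
        rcases le_or_gt t s with h | h
        · exact hsub ⟨ht.1, h⟩
        · -- step from s to t
          have hts : t - s ≤ ε := by have := ht.2; linarith
          have h1 : ε ≤ (r - s)/2 := hεle
          have htr : t ≤ r := by linarith
          have hsmem : s ∈ T := hsub ⟨hc₀s, le_refl _⟩
          have hsabs : |s| ≤ r := abs_le.mpr ⟨hsmem.1.1, hsmem.1.2⟩
          have htabs : |t| ≤ r := by
            apply abs_le.mpr
            constructor
            · have := hsmem.1.1; linarith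
            · exact htr
          have hcond : α^2 * (s - t)^2 ≤ β^2 * (r^2 - t^2) := by
            have key : α^2 * (t - s) ≤ β^2 * (r - t) := by
              have e1 : α^2 * (t - s) ≤ α^2 * ε := by nlinarith [sq_nonneg α]
              have e3 : r - t ≥ (r - s)/2 := by linarith
              nlinarith [sq_nonneg β]
            have expand : β^2 * (r^2 - t^2) = β^2 * (r - t) * (r + t) := by ring
            have htpos : 0 < r + t := by
              have := hsmem.1.1; nlinarith
            have hts0 : 0 < t - s := by linarith
            have hsge : -r ≤ s := (abs_le.mp hsabs).1
            have hle : t - s ≤ r + t := by linarith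
            calc α^2 * (s - t)^2 = (α^2 * (t - s)) * (t - s) := by ring
            _ ≤ (β^2 * (r - t)) * (t - s) := by nlinarith [sq_nonneg α]
            _ ≤ (β^2 * (r - t)) * (r + t) :=
              mul_le_mul_of_nonneg_left hle (mul_nonneg (sq_nonneg β) (by linarith))
            _ = β^2 * (r^2 - t^2) := by ring
          exact hPT t htabs (hstep s t hsabs htabs hcond (hTP s hsmem))
    have : s + ε ≤ s := le_csSup hSbdd hsε
    linarith
  intro c hc z hz hz'
  have : c ∈ T := hsub ⟨hc.1, by rw [hseq]; exact hc.2⟩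
  exact hTP c this z hz hz'


set_option maxHeartbeats 1000000 in
/-- Corollary 4.3 (first statement): for `n ≥ 3`, a closed set in `ℝⁿ` invariant under every
rotation fixing pointwise one of two distinct lines `H₁ ≠ H₂` through the origin is a union
of spheres centered at the origin. -/
theorem union_of_spheres_of_two_axes (n : ℕ) (hn : 3 ≤ n)
    (H₁ H₂ : Submodule ℝ (EuclideanSpace ℝ (Fin n)))
    (h₁ : Module.finrank ℝ H₁ = 1) (h₂ : Module.finrank ℝ H₂ = 1) (hne : H₁ ≠ H₂)
    (F : Set (EuclideanSpace ℝ (Fin n))) (hF : IsClosed F)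
    (hinv : ∀ g : EuclideanSpace ℝ (Fin n) ≃ₗᵢ[ℝ] EuclideanSpace ℝ (Fin n),
      LinearMap.det (g.toLinearEquiv :
        EuclideanSpace ℝ (Fin n) →ₗ[ℝ] EuclideanSpace ℝ (Fin n)) = 1 →
      ((∀ x ∈ H₁, g x = x) ∨ (∀ x ∈ H₂, g x = x)) → g '' F = F) :
    ∀ x ∈ F, ∀ y : EuclideanSpace ℝ (Fin n), ‖y‖ = ‖x‖ → y ∈ F := by
  intro x hx y hy
  -- obtain unit spanning vectors
  have hH₁bot : H₁ ≠ ⊥ := by intro h; rw [h, finrank_bot] at h₁; omega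
  have hH₂bot : H₂ ≠ ⊥ := by intro h; rw [h, finrank_bot] at h₂; omega
  obtain ⟨u₀, hu₀H, hu₀0⟩ := Submodule.exists_mem_ne_zero_of_ne_bot hH₁bot
  obtain ⟨v₀, hv₀H, hv₀0⟩ := Submodule.exists_mem_ne_zero_of_ne_bot hH₂bot
  have hspan1 : (ℝ ∙ u₀) = H₁ :=
    Submodule.eq_of_le_of_finrank_eq ((Submodule.span_singleton_le_iff_mem _ _).mpr hu₀H)
      (by rw [finrank_span_singleton hu₀0, h₁])
  have hspan2 : (ℝ ∙ v₀) = H₂ :=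
    Submodule.eq_of_le_of_finrank_eq ((Submodule.span_singleton_le_iff_mem _ _).mpr hv₀H)
      (by rw [finrank_span_singleton hv₀0, h₂])
  set u : EuclideanSpace ℝ (Fin n) := ‖u₀‖⁻¹ • u₀ with hu_def
  set v : EuclideanSpace ℝ (Fin n) := ‖v₀‖⁻¹ • v₀ with hv_def
  have hinvu : IsUnit (‖u₀‖⁻¹) := by
    apply IsUnit.inv; simp [norm_ne_zero_iff, hu₀0]
  have hinvv : IsUnit (‖v₀‖⁻¹) := by
    apply IsUnit.inv; simp [norm_ne_zero_iff, hv₀0]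
  have hH₁span : H₁ = (ℝ ∙ u) := by
    rw [hu_def, Submodule.span_singleton_smul_eq hinvu, hspan1]
  have hH₂span : H₂ = (ℝ ∙ v) := by
    rw [hv_def, Submodule.span_singleton_smul_eq hinvv, hspan2]
  have hunorm : ‖u‖ = 1 := by
    rw [hu_def, norm_smul, norm_inv, norm_norm,
      inv_mul_cancel₀ (norm_ne_zero_iff.mpr hu₀0)]
  have hvnorm : ‖v‖ = 1 := by
    rw [hv_def, norm_smul, norm_inv, norm_norm,
      inv_mul_cancel₀ (norm_ne_zero_iff.mpr hv₀0)]
  have huu : inner ℝ u u = (1:ℝ) := by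
    rw [real_inner_self_eq_norm_sq, hunorm]; norm_num
  -- decompose v
  set α : ℝ := inner ℝ u v with hα_def
  set m₀ : EuclideanSpace ℝ (Fin n) := v - α • u with hm₀_def
  have hm₀0 : m₀ ≠ 0 := by
    intro h
    have hveq : v = α • u := by
      have := sub_eq_zero.mp h; exact this
    have hle : H₂ ≤ H₁ := by
      rw [hH₂span, hH₁span, hveq]
      exact Submodule.span_le.mpr (by
        intro z hz; rcases hz with rfl
        exact Submodule.smul_mem _ _ (Submodule.mem_span_singleton_self u))
    exact hne ((Submodule.eq_of_le_of_finrank_eq hle (by rw [h₁, h₂])).symm)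
  set β : ℝ := ‖m₀‖ with hβ_def
  have hβ : 0 < β := by rw [hβ_def]; exact norm_pos_iff.mpr hm₀0
  set m : EuclideanSpace ℝ (Fin n) := β⁻¹ • m₀ with hm_def
  have hauu : inner ℝ u (α • u) = (α:ℝ) := by
    rw [real_inner_smul_right, huu, mul_one]
  have hum₀ : inner ℝ u m₀ = (0:ℝ) := by
    rw [hm₀_def, inner_sub_right, hauu, hα_def, sub_self]
  have hum : inner ℝ u m = (0:ℝ) := by
    rw [hm_def, real_inner_smul_right, hum₀, mul_zero]
  have hmnorm : ‖m‖ = 1 := by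
    rw [hm_def, norm_smul, norm_inv, norm_norm, ← hβ_def,
      inv_mul_cancel₀ (ne_of_gt hβ)]
  have hmm : inner ℝ m m = (1:ℝ) := by
    rw [real_inner_self_eq_norm_sq, hmnorm]; norm_num
  have hveq : v = α • u + β • m := by
    rw [hm_def, smul_inv_smul₀ (ne_of_gt hβ), hm₀_def]; abel
  -- the orthogonal third direction
  obtain ⟨e, henorm, hue, hme⟩ := exists_unit_ortho hn u m
  have hee : inner ℝ e e = (1:ℝ) := by
    rw [real_inner_self_eq_norm_sq, henorm]; norm_num
  -- transfer lemmas
  have hu_trans : ∀ z z' : EuclideanSpace ℝ (Fin n), ‖z‖ = ‖z'‖ →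
      inner ℝ u z = (inner ℝ u z' : ℝ) → z ∈ F → z' ∈ F := by
    intro z z' hnorm hip hz
    obtain ⟨g, hdet, hfix, hgz⟩ := rot_fix_line hn u z z' hnorm hip
    have himg := hinv g hdet (Or.inl (fun w hw => hfix w (by rwa [← hH₁span])))
    rw [← himg]; exact ⟨z, hz, hgz⟩
  have hv_trans : ∀ z z' : EuclideanSpace ℝ (Fin n), ‖z‖ = ‖z'‖ →
      inner ℝ (α • u + β • m) z = (inner ℝ (α • u + β • m) z' : ℝ) → z ∈ F → z' ∈ F := by
    intro z z' hnorm hip hz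
    rw [← hveq] at hip
    obtain ⟨g, hdet, hfix, hgz⟩ := rot_fix_line hn v z z' hnorm hip
    have himg := hinv g hdet (Or.inr (fun w hw => hfix w (by rwa [← hH₂span])))
    rw [← himg]; exact ⟨z, hz, hgz⟩
  -- main case split
  rcases eq_or_lt_of_le (norm_nonneg x) with hr0 | hr
  · have hx0 : x = 0 := norm_eq_zero.mp hr0.symm
    have hy0 : y = 0 := norm_eq_zero.mp (by rw [hy, ← hr0])
    rwa [hy0, ← hx0]
  · set r : ℝ := ‖x‖ with hr_def
    set c₀ : ℝ := inner ℝ u x with hc₀_def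
    have hc₀ : |c₀| ≤ r := by
      rw [hc₀_def, hr_def]
      calc |(inner ℝ u x : ℝ)| ≤ ‖u‖ * ‖x‖ := abs_real_inner_le_norm u x
      _ = ‖x‖ := by rw [hunorm, one_mul]
    have hstart : ∀ z : EuclideanSpace ℝ (Fin n), ‖z‖ = r → inner ℝ u z = (c₀:ℝ) → z ∈ F :=
      fun z hz hz' => hu_trans x z (by rw [hz, hr_def]) (by rw [hz', hc₀_def]) hx
    set d : ℝ := inner ℝ u y with hd_def
    have hd : |d| ≤ r := by
      rw [hd_def, ← hy]
      calc |(inner ℝ u y : ℝ)| ≤ ‖u‖ * ‖y‖ := abs_real_inner_le_norm u y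
      _ = ‖y‖ := by rw [hunorm, one_mul]
    rcases le_total c₀ d with hcd | hcd
    · exact reachUp hF huu hmm hee hum hue hme hβ hu_trans hv_trans hr hc₀ hstart d
        ⟨hcd, (abs_le.mp hd).2⟩ y hy rfl
    · -- use -u
      have huu' : inner ℝ (-u) (-u) = (1:ℝ) := by rw [inner_neg_neg, huu]
      have hum' : inner ℝ (-u) m = (0:ℝ) := by rw [inner_neg_left, hum, neg_zero]
      have hue' : inner ℝ (-u) e = (0:ℝ) := by rw [inner_neg_left, hue, neg_zero]
      have hu_trans' : ∀ z z' : EuclideanSpace ℝ (Fin n), ‖z‖ = ‖z'‖ →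
          inner ℝ (-u) z = (inner ℝ (-u) z' : ℝ) → z ∈ F → z' ∈ F := by
        intro z z' hnorm hip hz
        rw [inner_neg_left, inner_neg_left, neg_inj] at hip
        exact hu_trans z z' hnorm hip hz
      have hvec : (-α) • (-u) + β • m = α • u + β • m := by rw [neg_smul_neg]
      have hv_trans' : ∀ z z' : EuclideanSpace ℝ (Fin n), ‖z‖ = ‖z'‖ →
          inner ℝ ((-α) • (-u) + β • m) z = (inner ℝ ((-α) • (-u) + β • m) z' : ℝ) →
          z ∈ F → z' ∈ F := by
        rw [hvec]; exact hv_trans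
      have hc₀' : |(-c₀)| ≤ r := by rwa [abs_neg]
      have hstart' : ∀ z : EuclideanSpace ℝ (Fin n), ‖z‖ = r →
          inner ℝ (-u) z = (-c₀ : ℝ) → z ∈ F := by
        intro z hz hz'
        rw [inner_neg_left, neg_inj] at hz'
        exact hstart z hz hz'
      refine reachUp hF huu' hmm hee hum' hue' hme hβ hu_trans' hv_trans' hr hc₀' hstart'
        (-d) ⟨by linarith, by linarith [(abs_le.mp hd).1]⟩ y hy ?_
      rw [inner_neg_left, hd_def]
end
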